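/- arXiv:1108.4087 — 3 statements merged into one kernel-verified Lean document; each statement's English description precedes it below -/
import Mathlib

section
/- If f∈H_σ(φ), i.e., f is bi-univalent on 𝔻 with f(z)=z+a₂z²+a₃z³+⋯, g=f⁻¹, and f'≺φ, g'≺φ where φ(z)=1+B₁z+B₂z²+⋯ satisfies B₁>0, then assuming 3B₁²−4B₂+4B₁≠0, |a₂| ≤ B₁√B₁ / √|3B₁²−4B₂+4B₁|. -/
open Metric Complex Filter Topology

/-- n-th Taylor coefficient of `f` at `0`. -/
noncomputable def tc (f : ℂ → ℂ) (n : ℕ) : ℂ := iteratedDeriv n f 0 / n.factorial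

lemma aderiv {f : ℂ → ℂ} {x : ℂ} (h : AnalyticAt ℂ f x) : AnalyticAt ℂ (deriv f) x :=
  (AnalyticOnNhd.deriv (fun _ hy => hy : AnalyticOnNhd ℂ f {y | AnalyticAt ℂ f y})) x h

lemma evID2 {F G : ℂ → ℂ} (h : F =ᶠ[𝓝 (0:ℂ)] G) :
    iteratedDeriv 2 F 0 = iteratedDeriv 2 G 0 := by
  rw [iteratedDeriv_succ, iteratedDeriv_one, iteratedDeriv_succ, iteratedDeriv_one]
  exact h.deriv.deriv_eq

lemma evID3 {F G : ℂ → ℂ} (h : F =ᶠ[𝓝 (0:ℂ)] G) :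
    iteratedDeriv 3 F 0 = iteratedDeriv 3 G 0 := by
  rw [iteratedDeriv_succ, iteratedDeriv_succ, iteratedDeriv_one,
      iteratedDeriv_succ, iteratedDeriv_succ, iteratedDeriv_one]
  exact h.deriv.deriv.deriv_eq

lemma key_identity (a ω : ℂ) :
    Complex.normSq (1 - (starRingEnd ℂ) a * ω) - Complex.normSq (ω - a)
      = (1 - Complex.normSq a) * (1 - Complex.normSq ω) := by
  simp only [Complex.normSq_apply, Complex.mul_re, Complex.mul_im, Complex.sub_re,
    Complex.sub_im, Complex.conj_re, Complex.conj_im, Complex.one_re, Complex.one_im]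
  ring

lemma sp_core {w : ℂ → ℂ} (hw : DifferentiableOn ℂ w (ball 0 1))
    (hb : ∀ z ∈ ball (0:ℂ) 1, ‖w z‖ ≤ 1) : ‖deriv w 0‖ ≤ 1 - ‖w 0‖^2 := by
  have h0m : (0:ℂ) ∈ ball (0:ℂ) 1 := mem_ball_self one_pos
  by_cases hstrict : ∀ z ∈ ball (0:ℂ) 1, ‖w z‖ < 1
  · set a := w 0 with ha_def
    have ha : ‖a‖ < 1 := hstrict 0 h0m
    have hnsa : Complex.normSq a < 1 := by
      rw [← Complex.sq_norm]; nlinarith [norm_nonneg a]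
    set D : ℂ → ℂ := fun z => 1 - (starRingEnd ℂ) a * w z with hD_def
    have hns : ∀ z ∈ ball (0:ℂ) 1, Complex.normSq (w z) < 1 := by
      intro z hz
      rw [← Complex.sq_norm]
      nlinarith [norm_nonneg (w z), hstrict z hz]
    have hden : ∀ z ∈ ball (0:ℂ) 1, D z ≠ 0 := by
      intro z hz
      have h1 : ‖(starRingEnd ℂ) a * w z‖ < 1 := by
        rw [norm_mul, Complex.norm_conj]
        nlinarith [norm_nonneg a, norm_nonneg (w z), hstrict z hz]
      intro h
      rw [hD_def] at h
      have : (1:ℂ) = (starRingEnd ℂ) a * w z := by linear_combination h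
      rw [← this] at h1
      simp at h1
    set h : ℂ → ℂ := fun z => (w z - a) / D z with hh_def
    have hdh : DifferentiableOn ℂ h (ball 0 1) := by
      apply DifferentiableOn.div
      · exact hw.sub (differentiableOn_const a)
      · exact (differentiableOn_const 1).sub ((differentiableOn_const _).mul hw)
      · exact hden
    have hmaps : Set.MapsTo h (ball (0:ℂ) 1) (ball (0:ℂ) 1) := by
      intro z hz
      rw [mem_ball_zero_iff, hh_def]
      have hDz := hden z hz
      rw [norm_div, div_lt_one (norm_pos_iff.mpr hDz)]
      have key := key_identity a (w z)
      have h2 : Complex.normSq (w z - a) < Complex.normSq (D z) := by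
        have := hns z hz
        nlinarith
      calc ‖w z - a‖ = Real.sqrt (Complex.normSq (w z - a)) := by
            rw [Complex.norm_def]
        _ < Real.sqrt (Complex.normSq (D z)) := by
            apply Real.sqrt_lt_sqrt (Complex.normSq_nonneg _) h2
        _ = ‖D z‖ := by rw [Complex.norm_def]
    have hzero : h 0 = 0 := by simp [hh_def, ha_def]
    have hder : ‖deriv h 0‖ ≤ 1 :=
      Complex.norm_deriv_le_one_of_mapsTo_ball hdh (fun z hz => by rw [hzero]; exact ball_subset_closedBall (hmaps hz)) one_pos
    have hwd : DifferentiableAt ℂ w 0 := hw.differentiableAt (isOpen_ball.mem_nhds h0m)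
    have hNd : DifferentiableAt ℂ (fun z => w z - a) 0 := hwd.sub_const a
    have hDd : DifferentiableAt ℂ D 0 :=
      (differentiableAt_const 1).sub ((differentiableAt_const _).mul hwd)
    have hD0 : D 0 = 1 - Complex.normSq a := by
      rw [hD_def]; simp [← ha_def, Complex.normSq_eq_conj_mul_self]
    have hD0ne : D 0 ≠ 0 := hden 0 h0m
    have hderiv : deriv h 0 = deriv w 0 / D 0 := by
      rw [hh_def, deriv_fun_div hNd hDd hD0ne]
      simp [ha_def]
      rw [pow_two, ← div_div, mul_div_cancel_right₀ _ hD0ne]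
    rw [hderiv, norm_div] at hder
    have hD0pos : 0 < ‖D 0‖ := norm_pos_iff.mpr hD0ne
    have hD0norm : ‖D 0‖ = 1 - Complex.normSq a := by
      rw [hD0]
      rw [show ((1:ℂ) - Complex.normSq a) = ((1 - Complex.normSq a : ℝ) : ℂ) by push_cast; ring]
      rw [Complex.norm_real, Real.norm_of_nonneg (by linarith)]
    rw [div_le_one hD0pos, hD0norm] at hder
    have : ‖w 0‖^2 = Complex.normSq a := by
      rw [ha_def, Complex.sq_norm]
    linarith [this ▸ hder]
  · push_neg at hstrict
    obtain ⟨z₀, hz₀, hge⟩ := hstrict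
    have heq : ‖w z₀‖ = 1 := le_antisymm (hb z₀ hz₀) hge
    have hmax : IsMaxOn (norm ∘ w) (ball (0:ℂ) 1) z₀ := by
      intro z hz
      simp only [Function.comp_apply, Set.mem_setOf_eq, heq]
      exact hb z hz
    have heqOn := Complex.eqOn_of_isPreconnected_of_isMaxOn_norm
      (convex_ball (0:ℂ) 1).isPreconnected isOpen_ball hw hz₀ hmax
    have hev : w =ᶠ[𝓝 (0:ℂ)] Function.const ℂ (w z₀) :=
      eventually_of_mem (isOpen_ball.mem_nhds h0m) (fun z hz => heqOn hz)
    have hder0 : deriv w 0 = 0 := by rw [hev.deriv_eq]; exact deriv_const _ _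
    have hw0 : w 0 = w z₀ := heqOn h0m
    rw [hder0, norm_zero, hw0, heq]
    norm_num

lemma schwarzPick2 {u : ℂ → ℂ} (hu : AnalyticOnNhd ℂ u (ball 0 1))
    (humap : ∀ z ∈ ball (0:ℂ) 1, u z ∈ ball (0:ℂ) 1) (hu0 : u 0 = 0) :
    ‖iteratedDeriv 2 u 0‖ ≤ 2 * (1 - ‖deriv u 0‖^2) := by
  have h0m : (0:ℂ) ∈ ball (0:ℂ) 1 := mem_ball_self one_pos
  set w := dslope u 0 with hw_def
  have hwd : DifferentiableOn ℂ w (ball 0 1) :=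
    (differentiableOn_dslope (ball_mem_nhds _ one_pos)).mpr hu.differentiableOn
  have hwb : ∀ z ∈ ball (0:ℂ) 1, ‖w z‖ ≤ 1 := by
    intro z hz
    have := Complex.norm_dslope_le_div_of_mapsTo_ball hu.differentiableOn
      (fun x hx => by rw [hu0]; exact ball_subset_closedBall (humap x hx)) hz
    simpa using this
  have hw0 : w 0 = deriv u 0 := dslope_same u 0
  have huw : ∀ z : ℂ, u z = z * w z := by
    intro z
    rcases eq_or_ne z 0 with rfl | hz
    · simp [hu0]
    · rw [hw_def, dslope_of_ne _ hz, slope_def_field]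
      field_simp [hu0]
      rw [hu0, sub_zero, sub_zero, mul_comm]
  have hwa : AnalyticOnNhd ℂ w (ball 0 1) := hwd.analyticOnNhd isOpen_ball
  have hwa0 : AnalyticAt ℂ w 0 := hwa 0 h0m
  have hself : u =ᶠ[𝓝 (0:ℂ)] fun z => z * w z := Filter.Eventually.of_forall huw
  have hev1 : deriv u =ᶠ[𝓝 (0:ℂ)] fun z => w z + z * deriv w z := by
    have : deriv (fun z => z * w z) =ᶠ[𝓝 (0:ℂ)] fun z => w z + z * deriv w z := by
      filter_upwards [hwa0.eventually_analyticAt] with z hz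
      rw [deriv_fun_mul differentiableAt_fun_id hz.differentiableAt]
      simp [mul_comm]
    exact hself.deriv.trans this
  have hD2 : iteratedDeriv 2 u 0 = 2 * deriv w 0 := by
    rw [iteratedDeriv_succ, iteratedDeriv_one]
    rw [hev1.deriv_eq]
    have hdw : DifferentiableAt ℂ (deriv w) 0 := (aderiv hwa0).differentiableAt
    rw [deriv_fun_add hwa0.differentiableAt (show DifferentiableAt ℂ (fun z => z * deriv w z) 0 from differentiableAt_fun_id.mul hdw)]
    rw [deriv_fun_mul differentiableAt_fun_id hdw]
    simp
    ring
  rw [hD2, ← hw0, norm_mul]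
  simp only [Complex.norm_ofNat]
  have := sp_core hwd hwb
  nlinarith [norm_nonneg (deriv w 0)]

lemma compD {p q : ℂ → ℂ} (hp : AnalyticAt ℂ p (q 0)) (hq : AnalyticAt ℂ q 0) :
    deriv (p ∘ q) 0 = deriv p (q 0) * deriv q 0 ∧
    iteratedDeriv 2 (p ∘ q) 0 = iteratedDeriv 2 p (q 0) * (deriv q 0)^2
      + deriv p (q 0) * iteratedDeriv 2 q 0 ∧
    iteratedDeriv 3 (p ∘ q) 0 = iteratedDeriv 3 p (q 0) * (deriv q 0)^3
      + 3 * iteratedDeriv 2 p (q 0) * deriv q 0 * iteratedDeriv 2 q 0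
      + deriv p (q 0) * iteratedDeriv 3 q 0 := by
  have hqe : ∀ᶠ z in 𝓝 (0:ℂ), AnalyticAt ℂ q z := hq.eventually_analyticAt
  have hpe : ∀ᶠ z in 𝓝 (0:ℂ), AnalyticAt ℂ p (q z) :=
    hq.continuousAt.eventually hp.eventually_analyticAt
  have ev1 : deriv (p ∘ q) =ᶠ[𝓝 (0:ℂ)] fun z => deriv p (q z) * deriv q z := by
    filter_upwards [hqe, hpe] with z hqz hpz
    exact deriv_comp (x := z) hpz.differentiableAt hqz.differentiableAt
  have h1 : deriv (p ∘ q) 0 = deriv p (q 0) * deriv q 0 :=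
    deriv_comp (x := 0) hp.differentiableAt hq.differentiableAt
  have ev2 : deriv (fun z => deriv p (q z) * deriv q z) =ᶠ[𝓝 (0:ℂ)]
      fun z => deriv (deriv p) (q z) * deriv q z * deriv q z
        + deriv p (q z) * deriv (deriv q) z := by
    filter_upwards [hqe, hpe] with z hqz hpz
    have hA : DifferentiableAt ℂ (fun y => deriv p (q y)) z :=
      ((aderiv hpz).comp hqz).differentiableAt
    have hB : DifferentiableAt ℂ (deriv q) z := (aderiv hqz).differentiableAt
    rw [deriv_fun_mul hA hB]
    have hc : deriv (fun y => deriv p (q y)) z = deriv (deriv p) (q z) * deriv q z :=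
      deriv_comp (x := z) (aderiv hpz).differentiableAt hqz.differentiableAt
    rw [hc]
  have ev12 : deriv (deriv (p ∘ q)) =ᶠ[𝓝 (0:ℂ)]
      fun z => deriv (deriv p) (q z) * deriv q z * deriv q z
        + deriv p (q z) * deriv (deriv q) z := ev1.deriv.trans ev2
  have h2 : iteratedDeriv 2 (p ∘ q) 0 = iteratedDeriv 2 p (q 0) * (deriv q 0)^2
      + deriv p (q 0) * iteratedDeriv 2 q 0 := by
    rw [iteratedDeriv_succ, iteratedDeriv_one, ev1.deriv_eq]
    have hA : DifferentiableAt ℂ (fun y => deriv p (q y)) 0 :=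
      ((aderiv hp).comp hq).differentiableAt
    have hB : DifferentiableAt ℂ (deriv q) 0 := (aderiv hq).differentiableAt
    rw [deriv_fun_mul hA hB]
    have hc : deriv (fun y => deriv p (q y)) 0 = deriv (deriv p) (q 0) * deriv q 0 :=
      deriv_comp (x := 0) (aderiv hp).differentiableAt hq.differentiableAt
    rw [hc, iteratedDeriv_succ, iteratedDeriv_one, iteratedDeriv_succ, iteratedDeriv_one]
    ring
  refine ⟨h1, h2, ?_⟩
  rw [iteratedDeriv_succ, iteratedDeriv_succ, iteratedDeriv_one, ev12.deriv_eq]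
  have hA : DifferentiableAt ℂ (fun y => deriv (deriv p) (q y)) 0 :=
    ((aderiv (aderiv hp)).comp hq).differentiableAt
  have hB : DifferentiableAt ℂ (deriv q) 0 := (aderiv hq).differentiableAt
  have hC : DifferentiableAt ℂ (fun y => deriv p (q y)) 0 :=
    ((aderiv hp).comp hq).differentiableAt
  have hE : DifferentiableAt ℂ (deriv (deriv q)) 0 := (aderiv (aderiv hq)).differentiableAt
  have hAB : DifferentiableAt ℂ (fun y => deriv (deriv p) (q y) * deriv q y) 0 :=
    (((aderiv (aderiv hp)).comp hq).mul (aderiv hq)).differentiableAt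
  have hABB : DifferentiableAt ℂ (fun y => deriv (deriv p) (q y) * deriv q y * deriv q y) 0 :=
    ((((aderiv (aderiv hp)).comp hq).mul (aderiv hq)).mul (aderiv hq)).differentiableAt
  have hCE : DifferentiableAt ℂ (fun y => deriv p (q y) * deriv (deriv q) y) 0 :=
    (((aderiv hp).comp hq).mul (aderiv (aderiv hq))).differentiableAt
  rw [deriv_fun_add hABB hCE, deriv_fun_mul hAB hB, deriv_fun_mul hA hB, deriv_fun_mul hC hE]
  have hc1 : deriv (fun y => deriv (deriv p) (q y)) 0
      = deriv (deriv (deriv p)) (q 0) * deriv q 0 :=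
    deriv_comp (x := 0) (aderiv (aderiv hp)).differentiableAt hq.differentiableAt
  have hc2 : deriv (fun y => deriv p (q y)) 0 = deriv (deriv p) (q 0) * deriv q 0 :=
    deriv_comp (x := 0) (aderiv hp).differentiableAt hq.differentiableAt
  rw [hc1, hc2]
  simp only [iteratedDeriv_succ, iteratedDeriv_one, iteratedDeriv_zero]
  ring

theorem stmt9 (f g u v φ : ℂ → ℂ) (B₁ B₂ : ℝ)
    (hf : AnalyticOn ℂ f (ball (0:ℂ) 1)) (hfinj : Set.InjOn f (ball (0:ℂ) 1))
    (hf0 : f 0 = 0) (hf1 : deriv f 0 = 1)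
    (hg : AnalyticOn ℂ g (ball (0:ℂ) 1)) (hginj : Set.InjOn g (ball (0:ℂ) 1))
    (hinv : ∀ᶠ z in 𝓝 (0:ℂ), g (f z) = z)
    (hu : AnalyticOn ℂ u (ball (0:ℂ) 1)) (humap : ∀ z ∈ ball (0:ℂ) 1, u z ∈ ball (0:ℂ) 1) (hu0 : u 0 = 0)
    (hv : AnalyticOn ℂ v (ball (0:ℂ) 1)) (hvmap : ∀ w ∈ ball (0:ℂ) 1, v w ∈ ball (0:ℂ) 1) (hv0 : v 0 = 0)
    (hφ : AnalyticOn ℂ φ (ball (0:ℂ) 1)) (hφ0 : φ 0 = 1)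
    (hB₁ : tc φ 1 = (B₁ : ℂ)) (hB₂ : tc φ 2 = (B₂ : ℂ)) (hB₁pos : 0 < B₁)
    (hfu : ∀ z ∈ ball (0:ℂ) 1, deriv f z = φ (u z))
    (hgv : ∀ w ∈ ball (0:ℂ) 1, deriv g w = φ (v w))
    (hne : 3 * B₁ ^ 2 - 4 * B₂ + 4 * B₁ ≠ 0) :
    ‖tc f 2‖ ≤ B₁ * Real.sqrt B₁ / Real.sqrt |3 * B₁ ^ 2 - 4 * B₂ + 4 * B₁| := by
  have h0m : (0:ℂ) ∈ ball (0:ℂ) 1 := mem_ball_self one_pos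
  have hnb : ball (0:ℂ) 1 ∈ 𝓝 (0:ℂ) := isOpen_ball.mem_nhds h0m
  have hfa : AnalyticOnNhd ℂ f (ball 0 1) := isOpen_ball.analyticOn_iff_analyticOnNhd.mp hf
  have hga : AnalyticOnNhd ℂ g (ball 0 1) := isOpen_ball.analyticOn_iff_analyticOnNhd.mp hg
  have hua : AnalyticOnNhd ℂ u (ball 0 1) := isOpen_ball.analyticOn_iff_analyticOnNhd.mp hu
  have hva : AnalyticOnNhd ℂ v (ball 0 1) := isOpen_ball.analyticOn_iff_analyticOnNhd.mp hv
  have hφa : AnalyticOnNhd ℂ φ (ball 0 1) := isOpen_ball.analyticOn_iff_analyticOnNhd.mp hφ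
  have Af : AnalyticAt ℂ f 0 := hfa 0 h0m
  have Ag : AnalyticAt ℂ g 0 := hga 0 h0m
  have Au : AnalyticAt ℂ u 0 := hua 0 h0m
  have Av : AnalyticAt ℂ v 0 := hva 0 h0m
  have Aφu : AnalyticAt ℂ φ (u 0) := by rw [hu0]; exact hφa 0 h0m
  have Aφv : AnalyticAt ℂ φ (v 0) := by rw [hv0]; exact hφa 0 h0m
  have Agf : AnalyticAt ℂ g (f 0) := by rw [hf0]; exact hga 0 h0m
  -- coefficients of φ
  have hP1 : deriv φ 0 = (B₁ : ℂ) := by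
    have := hB₁; unfold tc at this
    simpa [iteratedDeriv_one] using this
  have hP2 : iteratedDeriv 2 φ 0 = 2 * (B₂ : ℂ) := by
    have := hB₂; unfold tc at this
    rw [div_eq_iff (by norm_num : ((2:ℕ).factorial : ℂ) ≠ 0)] at this
    rw [this]; norm_num [Nat.factorial]; ring
  -- subordination relations for f
  have evf : deriv f =ᶠ[𝓝 (0:ℂ)] (φ ∘ u) :=
    eventually_of_mem hnb (fun z hz => hfu z hz)
  obtain ⟨cf1, cf2, cf3⟩ := compD Aφu Au
  have eqf2 : iteratedDeriv 2 f 0 = (B₁:ℂ) * deriv u 0 := by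
    rw [iteratedDeriv_succ, iteratedDeriv_one, evf.deriv_eq, cf1, hu0, hP1]
  have eqf3 : iteratedDeriv 3 f 0
      = 2 * (B₂:ℂ) * (deriv u 0)^2 + (B₁:ℂ) * iteratedDeriv 2 u 0 := by
    have h31 : (3:ℕ) = 2 + 1 := rfl
    rw [h31, iteratedDeriv_succ', evID2 evf, cf2, hu0, hP1, hP2]
  -- subordination relations for g
  have evg : deriv g =ᶠ[𝓝 (0:ℂ)] (φ ∘ v) :=
    eventually_of_mem hnb (fun z hz => hgv z hz)
  obtain ⟨cg1, cg2, cg3⟩ := compD Aφv Av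
  have eqg2 : iteratedDeriv 2 g 0 = (B₁:ℂ) * deriv v 0 := by
    rw [iteratedDeriv_succ, iteratedDeriv_one, evg.deriv_eq, cg1, hv0, hP1]
  have eqg3 : iteratedDeriv 3 g 0
      = 2 * (B₂:ℂ) * (deriv v 0)^2 + (B₁:ℂ) * iteratedDeriv 2 v 0 := by
    have h31 : (3:ℕ) = 2 + 1 := rfl
    rw [h31, iteratedDeriv_succ', evID2 evg, cg2, hv0, hP1, hP2]
  -- inverse relations
  obtain ⟨ci1, ci2, ci3⟩ := compD Agf Af
  have hide : (g ∘ f) =ᶠ[𝓝 (0:ℂ)] id := hinv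
  have hdg0 : deriv g 0 = 1 := by
    have h := hide.deriv_eq
    rw [ci1, hf0, hf1, mul_one] at h
    rw [h, deriv_id]
  have hid2 : iteratedDeriv 2 (id : ℂ → ℂ) 0 = 0 := by
    rw [iteratedDeriv_succ, iteratedDeriv_one]
    simp
  have hid3 : iteratedDeriv 3 (id : ℂ → ℂ) 0 = 0 := by
    rw [iteratedDeriv_succ, iteratedDeriv_succ, iteratedDeriv_one]
    simp
  have i2 : iteratedDeriv 2 g 0 = - iteratedDeriv 2 f 0 := by
    have h := evID2 hide
    rw [ci2, hf0, hf1, hid2, hdg0] at h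
    linear_combination h
  have i3 : iteratedDeriv 3 g 0
      = 3 * (iteratedDeriv 2 f 0)^2 - iteratedDeriv 3 f 0 := by
    have h := evID3 hide
    rw [ci3, hf0, hf1, hid3, hdg0, i2] at h
    linear_combination h
  -- algebra
  set Df2 := iteratedDeriv 2 f 0 with hDf2
  set c1 := deriv u 0 with hc1
  set d1 := deriv v 0 with hd1
  set Cu := iteratedDeriv 2 u 0 with hCu
  set Cv := iteratedDeriv 2 v 0 with hCv
  have hB1ne : (B₁:ℂ) ≠ 0 := by exact_mod_cast hB₁pos.ne'
  have hd1c1 : d1 = -c1 := by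
    have h : (B₁:ℂ) * d1 = -((B₁:ℂ) * c1) := by rw [← eqg2, ← eqf2, i2]
    have h2 : (B₁:ℂ) * d1 = (B₁:ℂ) * (-c1) := by linear_combination h
    exact mul_left_cancel₀ hB1ne h2
  have e4 : 3 * Df2^2 - iteratedDeriv 3 f 0 = 2 * (B₂:ℂ) * c1^2 + (B₁:ℂ) * Cv := by
    rw [← i3, eqg3, hd1c1]; ring
  have S : Df2^2 * ((3*B₁^2 - 4*B₂ : ℝ) : ℂ) = (((B₁^3 : ℝ)) : ℂ) * (Cu + Cv) := by
    push_cast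
    linear_combination (B₁:ℂ)^2 * eqf3 + (B₁:ℂ)^2 * e4 - 4*(B₂:ℂ)*(Df2 + (B₁:ℂ)*c1) * eqf2
  -- Schwarz bounds
  have su : ‖Cu‖ ≤ 2 * (1 - ‖c1‖^2) := schwarzPick2 hua humap hu0
  have sv : ‖Cv‖ ≤ 2 * (1 - ‖d1‖^2) := schwarzPick2 hva hvmap hv0
  -- norms
  set x := ‖Df2‖ with hx
  set y := ‖c1‖ with hy
  have hxy : x = B₁ * y := by
    rw [hx, eqf2, norm_mul, Complex.norm_real, Real.norm_of_nonneg hB₁pos.le]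
  have hyd : ‖d1‖ = y := by rw [hd1c1, norm_neg]
  have hSnorm : x^2 * |3*B₁^2 - 4*B₂| = B₁^3 * ‖Cu + Cv‖ := by
    have := congrArg norm S
    rwa [norm_mul, norm_mul, norm_pow, Complex.norm_real, Complex.norm_real,
      Real.norm_eq_abs, Real.norm_of_nonneg (by positivity : (0:ℝ) ≤ B₁^3)] at this
  have hCuv : ‖Cu + Cv‖ ≤ 4 - 4*y^2 := by
    calc ‖Cu + Cv‖ ≤ ‖Cu‖ + ‖Cv‖ := norm_add_le _ _
      _ ≤ 2*(1 - y^2) + 2*(1 - y^2) := by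
          rw [hyd] at sv; exact add_le_add su sv
      _ = 4 - 4*y^2 := by ring
  -- key inequality : x^2 * (|T| + 4 B₁) ≤ 4 B₁^3
  set T := 3*B₁^2 - 4*B₂ with hT
  have hkey : x^2 * (|T| + 4*B₁) ≤ 4*B₁^3 := by
    have h1 : x^2 * |T| ≤ B₁^3 * (4 - 4*y^2) := by
      rw [hSnorm]
      exact mul_le_mul_of_nonneg_left hCuv (by positivity)
    have hx2 : x^2 = B₁^2 * y^2 := by rw [hxy]; ring
    nlinarith [hB₁pos]
  -- conclude
  have habs : |T + 4*B₁| ≤ |T| + 4*B₁ := by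
    calc |T + 4*B₁| ≤ |T| + |4*B₁| := abs_add_le _ _
      _ = |T| + 4*B₁ := by rw [abs_of_pos (by positivity : (0:ℝ) < 4*B₁)]
  have hTeq : T + 4*B₁ = 3 * B₁ ^ 2 - 4 * B₂ + 4 * B₁ := by rw [hT]
  have hTne : T + 4*B₁ ≠ 0 := hTeq ▸ hne
  have hTpos : 0 < |T + 4*B₁| := abs_pos.mpr hTne
  have hfinal : x^2 * |T + 4*B₁| ≤ 4*B₁^3 := by
    calc x^2 * |T + 4*B₁| ≤ x^2 * (|T| + 4*B₁) :=
          mul_le_mul_of_nonneg_left habs (by positivity)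
      _ ≤ 4*B₁^3 := hkey
  have htc : ‖tc f 2‖ = x / 2 := by
    rw [hx, hDf2]
    unfold tc
    rw [norm_div]
    norm_num [Nat.factorial]
  rw [htc]
  rw [← hTeq]
  have hs : 0 < Real.sqrt |T + 4*B₁| := Real.sqrt_pos.mpr hTpos
  rw [div_le_div_iff₀ (by norm_num) hs]
  have hsq1 : (Real.sqrt |T + 4*B₁|)^2 = |T + 4*B₁| := Real.sq_sqrt (abs_nonneg _)
  have hsq2 : (Real.sqrt B₁)^2 = B₁ := Real.sq_sqrt hB₁pos.le
  nlinarith [Real.sqrt_nonneg |T + 4*B₁|, Real.sqrt_nonneg B₁, norm_nonneg Df2,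
    mul_pos hB₁pos (Real.sqrt_pos.mpr hB₁pos), hs,
    sq_nonneg (x * Real.sqrt |T + 4*B₁| - 2 * (B₁ * Real.sqrt B₁))]
end

section
/- Let f be bi-univalent on 𝔻, f(z)=z+a₂z²+⋯, g=f⁻¹, α≥0, and suppose zf'(z)/f(z)+αz²f''(z)/f(z) ≺ φ(z) and wg'(w)/g(w)+αw²g''(w)/g(w) ≺ φ(w), where φ(z)=1+B₁z+B₂z²+⋯, B₁>0. Then, assuming B₁²(1+4α)+(B₁−B₂)(1+2α)²≠0, |a₂| ≤ B₁√B₁ / √|B₁²(1+4α)+(B₁−B₂)(1+2α)²|. -/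
open Metric Complex Filter Topology

namespace S11


lemma aderiv {p : ℂ → ℂ} {x : ℂ} (h : AnalyticAt ℂ p x) : AnalyticAt ℂ (deriv p) x := by
  obtain ⟨s, hs, hmem⟩ := h.eventually_analyticAt.exists_mem
  exact (AnalyticOnNhd.deriv fun y hy => hmem y hy) x (mem_of_mem_nhds hs)


lemma id2 (f : ℂ → ℂ) : iteratedDeriv 2 f = deriv (deriv f) := by
  rw [iteratedDeriv_succ, iteratedDeriv_one]

lemma id3 (f : ℂ → ℂ) : iteratedDeriv 3 f = deriv (deriv (deriv f)) := by
  rw [iteratedDeriv_succ, iteratedDeriv_succ, iteratedDeriv_one]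

lemma deriv_add_ev {p q : ℂ → ℂ} {x : ℂ} (hp : AnalyticAt ℂ p x) (hq : AnalyticAt ℂ q x) :
    deriv (fun z => p z + q z) =ᶠ[𝓝 x] fun z => deriv p z + deriv q z := by
  filter_upwards [hp.eventually_analyticAt, hq.eventually_analyticAt] with z hpz hqz
  exact deriv_add hpz.differentiableAt hqz.differentiableAt

lemma deriv_mul_ev {p q : ℂ → ℂ} {x : ℂ} (hp : AnalyticAt ℂ p x) (hq : AnalyticAt ℂ q x) :
    deriv (fun z => p z * q z) =ᶠ[𝓝 x] fun z => deriv p z * q z + p z * deriv q z := by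
  filter_upwards [hp.eventually_analyticAt, hq.eventually_analyticAt] with z hpz hqz
  exact deriv_mul hpz.differentiableAt hqz.differentiableAt

lemma d2_mul {p q : ℂ → ℂ} {x : ℂ} (hp : AnalyticAt ℂ p x) (hq : AnalyticAt ℂ q x) :
    deriv (deriv (fun z => p z * q z)) x =
      deriv (deriv p) x * q x + 2 * deriv p x * deriv q x + p x * deriv (deriv q) x := by
  rw [(deriv_mul_ev hp hq).deriv_eq]
  rw [deriv_fun_add (f := fun z => deriv p z * q z) (g := fun z => p z * deriv q z) (((aderiv hp).mul hq).differentiableAt)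
    ((hp.mul (aderiv hq)).differentiableAt)]
  rw [deriv_fun_mul (aderiv hp).differentiableAt hq.differentiableAt,
    deriv_fun_mul hp.differentiableAt (aderiv hq).differentiableAt]
  ring

lemma d2_mul_ev {p q : ℂ → ℂ} {x : ℂ} (hp : AnalyticAt ℂ p x) (hq : AnalyticAt ℂ q x) :
    deriv (deriv (fun z => p z * q z)) =ᶠ[𝓝 x]
      fun z => deriv (deriv p) z * q z + 2 * deriv p z * deriv q z + p z * deriv (deriv q) z := by
  filter_upwards [hp.eventually_analyticAt, hq.eventually_analyticAt] with z hpz hqz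
  exact d2_mul hpz hqz

lemma d3_mul {p q : ℂ → ℂ} {x : ℂ} (hp : AnalyticAt ℂ p x) (hq : AnalyticAt ℂ q x) :
    deriv (deriv (deriv (fun z => p z * q z))) x =
      deriv (deriv (deriv p)) x * q x + 3 * deriv (deriv p) x * deriv q x
        + 3 * deriv p x * deriv (deriv q) x + p x * deriv (deriv (deriv q)) x := by
  rw [(d2_mul_ev hp hq).deriv_eq]
  have h1 : DifferentiableAt ℂ (fun z => deriv (deriv p) z * q z) x :=
    ((aderiv (aderiv hp)).mul hq).differentiableAt
  have h2 : DifferentiableAt ℂ (fun z => 2 * deriv p z * deriv q z) x :=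
    (((analyticAt_const.mul (aderiv hp))).mul (aderiv hq)).differentiableAt
  have h3 : DifferentiableAt ℂ (fun z => p z * deriv (deriv q) z) x :=
    (hp.mul (aderiv (aderiv hq))).differentiableAt
  rw [deriv_fun_add (f := fun z => deriv (deriv p) z * q z + 2 * deriv p z * deriv q z) (h1.add h2) h3, deriv_fun_add h1 h2]
  rw [deriv_fun_mul (aderiv (aderiv hp)).differentiableAt hq.differentiableAt,
    deriv_fun_mul (c := fun z => 2 * deriv p z) (analyticAt_const.mul (aderiv hp)).differentiableAt (aderiv hq).differentiableAt,
    deriv_fun_mul hp.differentiableAt (aderiv (aderiv hq)).differentiableAt,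
    deriv_const_mul 2 (aderiv hp).differentiableAt]
  ring


lemma deriv_comp_ev {p q : ℂ → ℂ} {x : ℂ} (hp : AnalyticAt ℂ p (q x)) (hq : AnalyticAt ℂ q x) :
    deriv (fun z => p (q z)) =ᶠ[𝓝 x] fun z => deriv p (q z) * deriv q z := by
  filter_upwards [hq.eventually_analyticAt,
    hq.continuousAt.eventually hp.eventually_analyticAt] with z hqz hpz
  exact deriv_comp z hpz.differentiableAt hqz.differentiableAt

lemma d2_comp {p q : ℂ → ℂ} {x : ℂ} (hp : AnalyticAt ℂ p (q x)) (hq : AnalyticAt ℂ q x) :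
    deriv (deriv (fun z => p (q z))) x =
      deriv (deriv p) (q x) * (deriv q x) ^ 2 + deriv p (q x) * deriv (deriv q) x := by
  rw [(deriv_comp_ev hp hq).deriv_eq]
  have h1 : DifferentiableAt ℂ (fun z => deriv p (q z)) x :=
    ((aderiv hp).comp hq).differentiableAt
  rw [deriv_fun_mul h1 (aderiv hq).differentiableAt]
  have h2 : deriv (fun z => deriv p (q z)) x = deriv (deriv p) (q x) * deriv q x :=
    deriv_comp x (aderiv hp).differentiableAt hq.differentiableAt
  rw [h2]; ring

lemma dz : deriv (fun z : ℂ => z) = fun _ => (1:ℂ) := by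
  funext z; simp

lemma dcz2 (c : ℂ) : deriv (fun z : ℂ => c * z ^ 2) = fun z => c * (2 * z) := by
  funext z
  have := ((hasDerivAt_pow 2 z).const_mul c).deriv
  simp at this; simpa using this

lemma dcz2' (c : ℂ) : deriv (fun z : ℂ => c * (2 * z)) = fun _ => c * 2 := by
  funext z
  have h : (fun z : ℂ => c * (2 * z)) = fun z : ℂ => (c * 2) * z := by funext w; ring
  rw [h]
  have := ((hasDerivAt_id z).const_mul (c * 2)).deriv
  simpa using this



lemma moebius_lt {a w : ℂ} (ha : ‖a‖ < 1) (hw : ‖w‖ < 1) :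
    ‖(w - a) / (1 - (starRingEnd ℂ) a * w)‖ < 1 := by
  have hid : normSq (1 - (starRingEnd ℂ) a * w) - normSq (w - a)
      = (1 - normSq a) * (1 - normSq w) := by
    simp [Complex.normSq_apply, Complex.sub_re, Complex.sub_im, Complex.mul_re, Complex.mul_im,
      Complex.one_re, Complex.one_im]
    ring
  have hna : normSq a < 1 := by
    rw [← Complex.sq_norm]
    nlinarith [norm_nonneg a, ha]
  have hnw : normSq w < 1 := by
    rw [← Complex.sq_norm]
    nlinarith [norm_nonneg w, hw]
  have hlt : normSq (w - a) < normSq (1 - (starRingEnd ℂ) a * w) := by nlinarith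
  have hpos : 0 < normSq (1 - (starRingEnd ℂ) a * w) :=
    lt_of_le_of_lt (normSq_nonneg _) hlt
  have hden : (1 : ℂ) - (starRingEnd ℂ) a * w ≠ 0 := by
    intro h; rw [h] at hpos; simp at hpos
  have habs : ‖w - a‖ < ‖1 - (starRingEnd ℂ) a * w‖ := by
    rw [Complex.norm_def, Complex.norm_def]
    exact Real.sqrt_lt_sqrt (normSq_nonneg _) hlt
  rw [norm_div, div_lt_one (lt_of_le_of_lt (norm_nonneg _) habs)]
  exact habs


lemma schwarz_pick2 {u : ℂ → ℂ} (hu : DifferentiableOn ℂ u (ball (0:ℂ) 1))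
    (humap : Set.MapsTo u (ball (0:ℂ) 1) (ball (0:ℂ) 1)) (hu0 : u 0 = 0) :
    ‖deriv (deriv u) 0‖ ≤ 2 * (1 - ‖deriv u 0‖ ^ 2) := by
  have hball0 : (0:ℂ) ∈ ball (0:ℂ) 1 := mem_ball_self one_pos
  have hnhds : ball (0:ℂ) 1 ∈ 𝓝 (0:ℂ) := isOpen_ball.mem_nhds hball0
  set h := dslope u 0 with hh_def
  have hh : DifferentiableOn ℂ h (ball (0:ℂ) 1) :=
    (differentiableOn_dslope hnhds).mpr hu
  have humap' : Set.MapsTo u (ball (0:ℂ) 1) (ball (u 0) 1) := by rwa [hu0]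
  have hb : ∀ z ∈ ball (0:ℂ) 1, ‖h z‖ ≤ 1 := by
    intro z hz
    have := Complex.norm_dslope_le_div_of_mapsTo_ball hu (humap'.mono_right ball_subset_closedBall) hz
    simpa using this
  have hA : AnalyticAt ℂ h 0 := hh.analyticAt hnhds
  have hu_eq : u = fun z => z * h z := by
    funext z
    rcases eq_or_ne z 0 with rfl | hz
    · simp [hu0]
    · rw [hh_def, dslope_of_ne _ hz, slope_def_field]
      rw [hu0, sub_zero]
      field_simp
      ring
  have hd1 : deriv u 0 = h 0 := by rw [hh_def, dslope_same]
  have hd2 : deriv (deriv u) 0 = 2 * deriv h 0 := by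
    rw [hu_eq, d2_mul (p := fun z => z) analyticAt_id hA, dz]
    simp [deriv_const]
  have key : ‖deriv h 0‖ ≤ 1 - ‖h 0‖ ^ 2 := by
    by_cases hex : ∃ z₀ ∈ ball (0:ℂ) 1, ‖h z₀‖ = 1
    · obtain ⟨z₀, hz₀, hz₀n⟩ := hex
      have hmax : IsMaxOn (norm ∘ h) (ball (0:ℂ) 1) z₀ := by
        intro z hz
        simp only [Function.comp_apply, hz₀n]
        exact hb z hz
      have hcon : Set.EqOn h (fun _ => h z₀) (ball (0:ℂ) 1) :=
        Complex.eqOn_of_isPreconnected_of_isMaxOn_norm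
          (convex_ball (0:ℂ) 1).isPreconnected isOpen_ball hh hz₀ hmax
      have hev : h =ᶠ[𝓝 (0:ℂ)] fun _ => h z₀ := by
        filter_upwards [hnhds] with z hz using hcon hz
      have : deriv h 0 = 0 := by rw [hev.deriv_eq]; simp
      have h0n : ‖h 0‖ = 1 := by rw [hcon hball0]; exact hz₀n
      rw [this, h0n]; simp
    · push_neg at hex
      have hlt : ∀ z ∈ ball (0:ℂ) 1, ‖h z‖ < 1 := fun z hz =>
        lt_of_le_of_ne (hb z hz) (hex z hz)
      set a := h 0 with ha_def
      have ha : ‖a‖ < 1 := hlt 0 hball0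
      have hna : ‖a‖ ^ 2 < 1 := by nlinarith [norm_nonneg a]
      have hden : ∀ z ∈ ball (0:ℂ) 1, (1 : ℂ) - (starRingEnd ℂ) a * h z ≠ 0 := by
        intro z hz
        intro hcontra
        have h1 : ‖(starRingEnd ℂ) a * h z‖ < 1 := by
          rw [norm_mul, RCLike.norm_conj]
          calc ‖a‖ * ‖h z‖ ≤ ‖a‖ * 1 := by
                exact mul_le_mul_of_nonneg_left (hb z hz) (norm_nonneg a)
            _ < 1 := by simpa using ha
        have : (1:ℂ) = (starRingEnd ℂ) a * h z := by linear_combination hcontra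
        rw [← this] at h1; simp at h1
      set G := fun z => (h z - a) / (1 - (starRingEnd ℂ) a * h z) with hG_def
      have hGd : DifferentiableOn ℂ G (ball (0:ℂ) 1) := by
        apply DifferentiableOn.div
        · exact hh.sub (differentiableOn_const a)
        · exact (differentiableOn_const 1).sub ((differentiableOn_const _).mul hh)
        · exact hden
      have hG0 : G 0 = 0 := by simp [hG_def, ha_def]
      have hGmap : Set.MapsTo G (ball (0:ℂ) 1) (ball (G 0) 1) := by
        rw [hG0]
        intro z hz
        rw [mem_ball_zero_iff]
        exact moebius_lt ha (hlt z hz)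
      have hG1 : ‖deriv G 0‖ ≤ 1 := by
        have := Complex.norm_deriv_le_div_of_mapsTo_ball hGd (hGmap.mono_right ball_subset_closedBall) one_pos
        simpa using this
      have hden0 : (1 : ℂ) - (starRingEnd ℂ) a * a ≠ 0 := hden 0 hball0
      have hhd : HasDerivAt h (deriv h 0) 0 := (hh.differentiableAt hnhds).hasDerivAt
      have hN : HasDerivAt (fun z => h z - a) (deriv h 0) 0 := hhd.sub_const a
      have hD : HasDerivAt (fun z => (1:ℂ) - (starRingEnd ℂ) a * h z)
          (-((starRingEnd ℂ) a * deriv h 0)) 0 := (hhd.const_mul _).const_sub 1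
      have hGder : deriv G 0 = deriv h 0 / (1 - (starRingEnd ℂ) a * a) := by
        have hd := (hN.div hD (by simpa [← ha_def] using hden0)).deriv
        rw [hG_def, show (fun z => (h z - a) / (1 - (starRingEnd ℂ) a * h z)) = ((fun z => h z - a) / fun z => 1 - (starRingEnd ℂ) a * h z) from rfl, hd]
        simp only [← ha_def, sub_self, zero_mul, mul_zero, sub_zero, zero_div, neg_mul,
          mul_neg, sub_neg_eq_add, zero_add]
        rw [add_zero, sq, mul_div_mul_right _ _ hden0]
      have hre : (1 : ℂ) - (starRingEnd ℂ) a * a = ((1 - ‖a‖ ^ 2 : ℝ) : ℂ) := by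
        have h1 : (starRingEnd ℂ) a * a = ((‖a‖ ^ 2 : ℝ) : ℂ) := by
          rw [mul_comm, Complex.mul_conj, Complex.normSq_eq_norm_sq]
        rw [h1]; push_cast; ring
      have hGn : ‖deriv G 0‖ = ‖deriv h 0‖ / (1 - ‖a‖ ^ 2) := by
        rw [hGder, hre, norm_div, Complex.norm_real, Real.norm_eq_abs, abs_of_pos (by linarith)]
      rw [hGn] at hG1
      have := (div_le_one (by linarith : (0:ℝ) < 1 - ‖a‖ ^ 2)).mp hG1
      linarith
  rw [hd2, hd1, norm_mul]
  simp only [Complex.norm_ofNat]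
  nlinarith [key, norm_nonneg (deriv h 0)]

lemma d2_add {p q : ℂ → ℂ} {x : ℂ} (hp : AnalyticAt ℂ p x) (hq : AnalyticAt ℂ q x) :
    deriv (deriv (fun z => p z + q z)) x = deriv (deriv p) x + deriv (deriv q) x := by
  rw [(deriv_add_ev hp hq).deriv_eq]
  exact deriv_add (aderiv hp).differentiableAt (aderiv hq).differentiableAt

lemma d3_add {p q : ℂ → ℂ} {x : ℂ} (hp : AnalyticAt ℂ p x) (hq : AnalyticAt ℂ q x) :
    deriv (deriv (deriv (fun z => p z + q z))) x =
      deriv (deriv (deriv p)) x + deriv (deriv (deriv q)) x := by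
  rw [((deriv_add_ev hp hq).deriv).deriv_eq]
  exact d2_add (aderiv hp) (aderiv hq)

lemma key_eqs {f u φ : ℂ → ℂ} (α B₁ B₂ : ℝ)
    (hfa : AnalyticAt ℂ f 0) (hf0 : f 0 = 0) (hf1 : deriv f 0 = 1)
    (hua : AnalyticAt ℂ u 0) (hu0 : u 0 = 0)
    (hφa : AnalyticAt ℂ φ 0) (hφ0 : φ 0 = 1)
    (hB₁ : deriv φ 0 = (B₁:ℂ)) (hB₂ : deriv (deriv φ) 0 = 2*(B₂:ℂ))
    (heq : ∀ z ∈ ball (0:ℂ) 1, z ≠ 0 →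
      z * deriv f z / f z + (α : ℂ) * z ^ 2 * iteratedDeriv 2 f z / f z = φ (u z)) :
    ((1:ℂ) + 2*(α:ℂ)) * deriv (deriv f) 0 = 2 * (B₁:ℂ) * deriv u 0 ∧
    ((2:ℂ) + 6*(α:ℂ)) * deriv (deriv (deriv f)) 0 =
      6 * (B₂:ℂ) * (deriv u 0)^2 + 3 * (B₁:ℂ) * deriv (deriv u) 0
        + 3 * (B₁:ℂ) * deriv u 0 * deriv (deriv f) 0 := by
  have hball0 : (0:ℂ) ∈ ball (0:ℂ) 1 := mem_ball_self one_pos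
  have hnhds : ball (0:ℂ) 1 ∈ 𝓝 (0:ℂ) := isOpen_ball.mem_nhds hball0
  simp only [id2] at heq
  have hφa' : AnalyticAt ℂ φ (u 0) := hu0.symm ▸ hφa
  have hda := aderiv hfa
  have hdda := aderiv hda
  have hΨ : AnalyticAt ℂ (fun z => φ (u z)) 0 := hφa'.comp hua
  have hpa : AnalyticAt ℂ (fun z : ℂ => z) 0 := analyticAt_id
  have hca : AnalyticAt ℂ (fun z : ℂ => (α:ℂ) * z ^ 2) 0 :=
    analyticAt_const.mul (analyticAt_id.pow 2)
  -- f z ≠ 0 on a punctured neighborhood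
  have hfz : ∀ᶠ z in 𝓝[≠] (0:ℂ), f z ≠ 0 := by
    rcases hfa.eventually_eq_zero_or_eventually_ne_zero with h | h
    · exfalso
      have h' : f =ᶠ[𝓝 (0:ℂ)] fun _ => (0:ℂ) := h
      have h0 : deriv f 0 = deriv (fun _ : ℂ => (0:ℂ)) 0 := h'.deriv_eq
      rw [hf1] at h0; simp at h0
    · exact h
  -- functional equation without denominators
  have hFG : (fun z => z * deriv f z + (α:ℂ) * z ^ 2 * deriv (deriv f) z) =ᶠ[𝓝 (0:ℂ)]
      fun z => φ (u z) * f z := by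
    have h1 : ∀ᶠ z in 𝓝[≠] (0:ℂ),
        z * deriv f z + (α:ℂ) * z ^ 2 * deriv (deriv f) z = φ (u z) * f z := by
      have hmem : ∀ᶠ z in 𝓝[≠] (0:ℂ), z ∈ ball (0:ℂ) 1 :=
        eventually_nhdsWithin_of_eventually_nhds hnhds
      have hne0 : ∀ᶠ z in 𝓝[≠] (0:ℂ), z ≠ 0 := by
        filter_upwards [self_mem_nhdsWithin] with z hz
        simpa using hz
      filter_upwards [hfz, hmem, hne0] with z h1 h2 h3
      have := heq z h2 h3
      rw [← add_div, div_eq_iff h1] at this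
      exact this
    rw [eventually_nhdsWithin_iff] at h1
    filter_upwards [h1] with z hz
    rcases eq_or_ne z 0 with rfl | h
    · simp [hf0]
    · exact hz (by simpa using h)
  have e2 := hFG.iteratedDeriv_eq 2
  have e3 := hFG.iteratedDeriv_eq 3
  simp only [id2, id3] at e2 e3
  -- compute the left-hand sides
  have hA2 : deriv (deriv (fun z : ℂ => z * deriv f z)) 0 = 2 * deriv (deriv f) 0 := by
    rw [d2_mul (p := fun z : ℂ => z) hpa hda, dz]
    simp [deriv_const]
  have hA3 : deriv (deriv (deriv (fun z : ℂ => z * deriv f z))) 0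
      = 3 * deriv (deriv (deriv f)) 0 := by
    rw [d3_mul (p := fun z : ℂ => z) hpa hda, dz]
    simp [deriv_const]
  have hB2v : deriv (deriv (fun z : ℂ => (α:ℂ) * z ^ 2 * deriv (deriv f) z)) 0
      = 2 * (α:ℂ) * deriv (deriv f) 0 := by
    rw [d2_mul (p := fun z : ℂ => (α:ℂ) * z ^ 2) hca hdda, dcz2, dcz2']
    simp only [mul_zero, zero_mul]; ring
  have hB3v : deriv (deriv (deriv (fun z : ℂ => (α:ℂ) * z ^ 2 * deriv (deriv f) z))) 0
      = 6 * (α:ℂ) * deriv (deriv (deriv f)) 0 := by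
    rw [d3_mul (p := fun z : ℂ => (α:ℂ) * z ^ 2) hca hdda, dcz2, dcz2']
    simp only [deriv_const', mul_zero, zero_mul]; ring
  have hL2 : deriv (deriv (fun z => z * deriv f z + (α:ℂ) * z ^ 2 * deriv (deriv f) z)) 0
      = (2 + 2*(α:ℂ)) * deriv (deriv f) 0 := by
    rw [d2_add (p := fun z => z * deriv f z) (q := fun z => (α:ℂ) * z ^ 2 * deriv (deriv f) z) (hpa.mul hda) (hca.mul hdda), hA2, hB2v]; ring
  have hL3 : deriv (deriv (deriv (fun z => z * deriv f z + (α:ℂ) * z ^ 2 * deriv (deriv f) z))) 0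
      = (3 + 6*(α:ℂ)) * deriv (deriv (deriv f)) 0 := by
    rw [d3_add (p := fun z => z * deriv f z) (q := fun z => (α:ℂ) * z ^ 2 * deriv (deriv f) z) (hpa.mul hda) (hca.mul hdda), hA3, hB3v]; ring
  -- compute the right-hand sides
  have hΨ0 : φ (u 0) = 1 := by rw [hu0, hφ0]
  have hΨ1 : deriv (fun z => φ (u z)) 0 = (B₁:ℂ) * deriv u 0 := by
    rw [(deriv_comp_ev hφa' hua).eq_of_nhds, hu0, hB₁]
  have hΨ2 : deriv (deriv (fun z => φ (u z))) 0
      = 2*(B₂:ℂ) * (deriv u 0)^2 + (B₁:ℂ) * deriv (deriv u) 0 := by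
    rw [d2_comp hφa' hua, hu0, hB₂, hB₁]
  have hR2 : deriv (deriv (fun z => φ (u z) * f z)) 0
      = 2 * (B₁:ℂ) * deriv u 0 + deriv (deriv f) 0 := by
    rw [d2_mul hΨ hfa, hΨ0, hΨ1, hf0, hf1]; ring
  have hR3 : deriv (deriv (deriv (fun z => φ (u z) * f z))) 0
      = 3 * (2*(B₂:ℂ) * (deriv u 0)^2 + (B₁:ℂ) * deriv (deriv u) 0)
        + 3 * ((B₁:ℂ) * deriv u 0) * deriv (deriv f) 0 + deriv (deriv (deriv f)) 0 := by
    rw [d3_mul hΨ hfa, hΨ0, hΨ1, hΨ2, hf0, hf1]; ring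
  rw [hL2, hR2] at e2
  rw [hL3, hR3] at e3
  constructor
  · linear_combination e2
  · linear_combination e3

lemma inv_derivs {f g : ℂ → ℂ} (hfa : AnalyticAt ℂ f 0) (hga : AnalyticAt ℂ g 0)
    (hf0 : f 0 = 0) (hf1 : deriv f 0 = 1)
    (hinv : ∀ᶠ z in 𝓝 (0:ℂ), g (f z) = z) :
    g 0 = 0 ∧ deriv g 0 = 1 ∧ deriv (deriv g) 0 = - deriv (deriv f) 0 ∧
      deriv (deriv (deriv g)) 0 = 3 * (deriv (deriv f) 0) ^ 2 - deriv (deriv (deriv f)) 0 := by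
  have hg0 : g 0 = 0 := by have h := hinv.self_of_nhds; rwa [hf0] at h
  have hga' : AnalyticAt ℂ g (f 0) := hf0.symm ▸ hga
  have hdga := aderiv hga
  have hddga := aderiv hdga
  have hdddga := aderiv hddga
  have hdfa := aderiv hfa
  have hddfa := aderiv hdfa
  have hinv' : (fun z => g (f z)) =ᶠ[𝓝 (0:ℂ)] fun z => z := hinv
  have h3 := hinv'.deriv
  rw [dz] at h3
  have hQ : (fun z => deriv g (f z) * deriv f z) =ᶠ[𝓝 (0:ℂ)] fun _ => (1:ℂ) :=
    (deriv_comp_ev hga' hfa).symm.trans h3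
  have hg1 : deriv g 0 = 1 := by
    have h := hQ.eq_of_nhds
    simp only [hf0, hf1, mul_one] at h
    exact h
  have hgfa : AnalyticAt ℂ (fun z => deriv g (f z)) 0 :=
    (hf0.symm ▸ hdga : AnalyticAt ℂ (deriv g) (f 0)).comp hfa
  have hAa : AnalyticAt ℂ (fun z => deriv (deriv g) (f z)) 0 :=
    (hf0.symm ▸ hddga : AnalyticAt ℂ (deriv (deriv g)) (f 0)).comp hfa
  have h5 := deriv_mul_ev hgfa hdfa
  have h6 := deriv_comp_ev (hf0.symm ▸ hdga : AnalyticAt ℂ (deriv g) (f 0)) hfa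
  have h4 := hQ.deriv
  rw [deriv_const'] at h4
  have hR : (fun z => deriv (deriv g) (f z) * deriv f z * deriv f z
      + deriv g (f z) * deriv (deriv f) z) =ᶠ[𝓝 (0:ℂ)] fun _ => (0:ℂ) := by
    filter_upwards [h4, h5, h6] with z e4 e5 e6
    rw [← e6, ← e5]
    exact e4
  have hg2 : deriv (deriv g) 0 = - deriv (deriv f) 0 := by
    have h := hR.eq_of_nhds
    simp only [hf0, hf1, hg1, mul_one, one_mul] at h
    linear_combination h
  have hRd : deriv (fun z => deriv (deriv g) (f z) * deriv f z * deriv f z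
      + deriv g (f z) * deriv (deriv f) z) 0 = 0 := by
    rw [hR.deriv_eq]; simp
  have hABa : AnalyticAt ℂ (fun z => deriv (deriv g) (f z) * deriv f z) 0 := hAa.mul hdfa
  have d1 : deriv (fun z => deriv (deriv g) (f z) * deriv f z * deriv f z
        + deriv g (f z) * deriv (deriv f) z) 0
      = deriv (fun z => deriv (deriv g) (f z) * deriv f z * deriv f z) 0
        + deriv (fun z => deriv g (f z) * deriv (deriv f) z) 0 :=
    deriv_add ((hABa.mul hdfa).differentiableAt) ((hgfa.mul hddfa).differentiableAt)
  have d2' : deriv (fun z => deriv (deriv g) (f z) * deriv f z * deriv f z) 0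
      = deriv (fun z => deriv (deriv g) (f z) * deriv f z) 0 * deriv f 0
        + (deriv (deriv g) (f 0) * deriv f 0) * deriv (deriv f) 0 :=
    deriv_mul hABa.differentiableAt hdfa.differentiableAt
  have d3' : deriv (fun z => deriv (deriv g) (f z) * deriv f z) 0
      = deriv (fun z => deriv (deriv g) (f z)) 0 * deriv f 0
        + deriv (deriv g) (f 0) * deriv (deriv f) 0 :=
    deriv_mul hAa.differentiableAt hdfa.differentiableAt
  have d4 : deriv (fun z => deriv (deriv g) (f z)) 0 = deriv (deriv (deriv g)) (f 0) * deriv f 0 :=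
    deriv_comp 0 (hf0.symm ▸ hddga : AnalyticAt ℂ (deriv (deriv g)) (f 0)).differentiableAt
      hfa.differentiableAt
  have d5 : deriv (fun z => deriv g (f z) * deriv (deriv f) z) 0
      = deriv (fun z => deriv g (f z)) 0 * deriv (deriv f) 0
        + deriv g (f 0) * deriv (deriv (deriv f)) 0 :=
    deriv_mul hgfa.differentiableAt hddfa.differentiableAt
  have d6 : deriv (fun z => deriv g (f z)) 0 = deriv (deriv g) (f 0) * deriv f 0 :=
    deriv_comp 0 (hf0.symm ▸ hdga : AnalyticAt ℂ (deriv g) (f 0)).differentiableAt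
      hfa.differentiableAt
  rw [d1, d2', d3', d4, d5, d6, hf0, hf1, hg1] at hRd
  refine ⟨hg0, hg1, hg2, ?_⟩
  linear_combination hRd - 3 * deriv (deriv f) 0 * hg2
end S11

set_option maxHeartbeats 2000000 in
theorem stmt11 (f g u v φ : ℂ → ℂ) (α B₁ B₂ : ℝ) (hα : 0 ≤ α)
    (hf : AnalyticOn ℂ f (ball (0:ℂ) 1)) (hfinj : Set.InjOn f (ball (0:ℂ) 1))
    (hf0 : f 0 = 0) (hf1 : deriv f 0 = 1)
    (hg : AnalyticOn ℂ g (ball (0:ℂ) 1)) (hginj : Set.InjOn g (ball (0:ℂ) 1))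
    (hinv : ∀ᶠ z in 𝓝 (0:ℂ), g (f z) = z)
    (hu : AnalyticOn ℂ u (ball (0:ℂ) 1)) (humap : ∀ z ∈ ball (0:ℂ) 1, u z ∈ ball (0:ℂ) 1) (hu0 : u 0 = 0)
    (hv : AnalyticOn ℂ v (ball (0:ℂ) 1)) (hvmap : ∀ w ∈ ball (0:ℂ) 1, v w ∈ ball (0:ℂ) 1) (hv0 : v 0 = 0)
    (hφ : AnalyticOn ℂ φ (ball (0:ℂ) 1)) (hφ0 : φ 0 = 1)
    (hB₁ : tc φ 1 = (B₁ : ℂ)) (hB₂ : tc φ 2 = (B₂ : ℂ)) (hB₁pos : 0 < B₁)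
    (hfu : ∀ z ∈ ball (0:ℂ) 1, z ≠ 0 →
      z * deriv f z / f z + (α : ℂ) * z ^ 2 * iteratedDeriv 2 f z / f z = φ (u z))
    (hgv : ∀ w ∈ ball (0:ℂ) 1, w ≠ 0 →
      w * deriv g w / g w + (α : ℂ) * w ^ 2 * iteratedDeriv 2 g w / g w = φ (v w))
    (hne : B₁ ^ 2 * (1 + 4 * α) + (B₁ - B₂) * (1 + 2 * α) ^ 2 ≠ 0) :
    ‖tc f 2‖ ≤ B₁ * Real.sqrt B₁ /
      Real.sqrt |B₁ ^ 2 * (1 + 4 * α) + (B₁ - B₂) * (1 + 2 * α) ^ 2| := by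
  have hball0 : (0:ℂ) ∈ ball (0:ℂ) 1 := mem_ball_self one_pos
  have hnhds : ball (0:ℂ) 1 ∈ 𝓝 (0:ℂ) := isOpen_ball.mem_nhds hball0
  -- analyticity at 0
  have hf' := isOpen_ball.analyticOn_iff_analyticOnNhd.mp hf
  have hg' := isOpen_ball.analyticOn_iff_analyticOnNhd.mp hg
  have hu' := isOpen_ball.analyticOn_iff_analyticOnNhd.mp hu
  have hv' := isOpen_ball.analyticOn_iff_analyticOnNhd.mp hv
  have hφ' := isOpen_ball.analyticOn_iff_analyticOnNhd.mp hφ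
  have hfa : AnalyticAt ℂ f 0 := hf' 0 hball0
  have hga : AnalyticAt ℂ g 0 := hg' 0 hball0
  have hua : AnalyticAt ℂ u 0 := hu' 0 hball0
  have hva : AnalyticAt ℂ v 0 := hv' 0 hball0
  have hφa : AnalyticAt ℂ φ 0 := hφ' 0 hball0
  -- Taylor data of φ
  have hB₁' : deriv φ 0 = (B₁:ℂ) := by
    have := hB₁
    simp only [tc, iteratedDeriv_one, Nat.factorial_one, Nat.cast_one, div_one] at this
    exact this
  have hB₂' : deriv (deriv φ) 0 = 2 * (B₂:ℂ) := by
    have h := hB₂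
    simp only [tc, S11.id2] at h
    have : (Nat.factorial 2 : ℂ) = 2 := by norm_num [Nat.factorial]
    rw [this] at h
    field_simp at h
    linear_combination h
  -- inverse function data
  obtain ⟨hg0, hg1, hg2, hg3⟩ := S11.inv_derivs hfa hga hf0 hf1 hinv
  -- subordination coefficient relations
  obtain ⟨Ef1, Ef2⟩ := S11.key_eqs α B₁ B₂ hfa hf0 hf1 hua hu0 hφa hφ0 hB₁' hB₂' hfu
  obtain ⟨Eg1, Eg2⟩ := S11.key_eqs α B₁ B₂ hga hg0 hg1 hva hv0 hφa hφ0 hB₁' hB₂' hgv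
  set A := deriv (deriv f) 0 with hA_def
  set T := deriv (deriv (deriv f)) 0 with hT_def
  set c1 := deriv u 0 with hc1_def
  set c2 := deriv (deriv u) 0 with hc2_def
  set d1 := deriv v 0 with hd1_def
  set d2 := deriv (deriv v) 0 with hd2_def
  rw [hg2] at Eg1 Eg2
  rw [hg3] at Eg2
  have hB₁ne : (B₁:ℂ) ≠ 0 := by exact_mod_cast hB₁pos.ne'
  have hd1c1 : d1 = -c1 := by
    have h : 2 * (B₁:ℂ) * (d1 + c1) = 0 := by linear_combination -Eg1 - Ef1
    have h2 : d1 + c1 = 0 := by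
      rcases mul_eq_zero.mp h with h' | h'
      · exfalso; rcases mul_eq_zero.mp h' with h'' | h''
        · norm_num at h''
        · exact hB₁ne h''
      · exact h'
    linear_combination h2
  rw [hd1c1] at Eg2
  -- master complex identity
  have master : ((B₁:ℂ)^2*(1+4*(α:ℂ)) - (B₂:ℂ)*(1+2*(α:ℂ))^2) * A^2
      = (B₁:ℂ)^3 * (c2 + d2) := by
    linear_combination ((B₁:ℂ)^2/3) * Ef2 + ((B₁:ℂ)^2/3) * Eg2
      - ((B₁:ℂ)^2 * A + (B₂:ℂ)*(((1:ℂ)+2*(α:ℂ))*A + 2*(B₁:ℂ)*c1)) * Ef1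
  -- Schwarz-Pick bounds
  have hsu : ‖c2‖ ≤ 2 * (1 - ‖c1‖ ^ 2) :=
    S11.schwarz_pick2 (hu'.differentiableOn) (fun z hz => humap z hz) hu0
  have hsv : ‖d2‖ ≤ 2 * (1 - ‖d1‖ ^ 2) :=
    S11.schwarz_pick2 (hv'.differentiableOn) (fun z hz => hvmap z hz) hv0
  have hnd1 : ‖d1‖ = ‖c1‖ := by rw [hd1c1, norm_neg]
  rw [hnd1] at hsv
  -- norm of c1 in terms of A
  have hnc1 : 2 * B₁ * ‖c1‖ = (1 + 2*α) * ‖A‖ := by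
    have h := congrArg norm Ef1
    rw [norm_mul, norm_mul, norm_mul] at h
    have h1 : ‖((1:ℂ) + 2*(α:ℂ))‖ = 1 + 2*α := by
      have : ((1:ℂ) + 2*(α:ℂ)) = ((1 + 2*α : ℝ) : ℂ) := by push_cast; ring
      rw [this, Complex.norm_real, Real.norm_eq_abs, abs_of_pos (by linarith)]
    have h2 : ‖(2:ℂ)‖ = 2 := by simp
    have h3 : ‖(B₁:ℂ)‖ = B₁ := by
      rw [Complex.norm_real, Real.norm_eq_abs, abs_of_pos hB₁pos]
    rw [h1, h2, h3] at h
    linarith [h.symm]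
  -- real inequality chain
  set K : ℝ := B₁^2*(1+4*α) - B₂*(1+2*α)^2 with hK_def
  have hmnorm : |K| * ‖A‖^2 ≤ B₁^3 * (4 - 4*‖c1‖^2) := by
    have h := congrArg norm master
    rw [norm_mul, norm_mul, norm_pow, norm_pow] at h
    have h1 : ‖((B₁:ℂ)^2*(1+4*(α:ℂ)) - (B₂:ℂ)*(1+2*(α:ℂ))^2)‖ = |K| := by
      have : ((B₁:ℂ)^2*(1+4*(α:ℂ)) - (B₂:ℂ)*(1+2*(α:ℂ))^2) = ((K:ℝ):ℂ) := by
        rw [hK_def]; push_cast; ring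
      rw [this, Complex.norm_real, Real.norm_eq_abs]
    have h3 : ‖(B₁:ℂ)‖ = B₁ := by
      rw [Complex.norm_real, Real.norm_eq_abs, abs_of_pos hB₁pos]
    rw [h1, h3] at h
    calc |K| * ‖A‖^2 = B₁^3 * ‖c2 + d2‖ := h
      _ ≤ B₁^3 * (‖c2‖ + ‖d2‖) := by
          apply mul_le_mul_of_nonneg_left (norm_add_le _ _) (by positivity)
      _ ≤ B₁^3 * (4 - 4*‖c1‖^2) := by
          apply mul_le_mul_of_nonneg_left (by linarith) (by positivity)
  -- substitute ‖c1‖²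
  have hc1sq : 4 * B₁^2 * ‖c1‖^2 = (1+2*α)^2 * ‖A‖^2 := by
    have h : (2*B₁*‖c1‖)^2 = ((1+2*α)*‖A‖)^2 := by rw [hnc1]
    linear_combination h
  set t : ℝ := ‖A‖^2 with ht_def
  have ht0 : 0 ≤ t := sq_nonneg _
  have hmain : t * (|K| + B₁*(1+2*α)^2) ≤ 4 * B₁^3 := by nlinarith [hmnorm, hc1sq, hB₁pos]
  set D : ℝ := B₁ ^ 2 * (1 + 4 * α) + (B₁ - B₂) * (1 + 2 * α) ^ 2 with hD_def
  have hDK : |D| ≤ |K| + B₁*(1+2*α)^2 := by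
    have : D = K + B₁*(1+2*α)^2 := by rw [hD_def, hK_def]; ring
    rw [this]
    calc |K + B₁*(1+2*α)^2| ≤ |K| + |B₁*(1+2*α)^2| := abs_add_le _ _
      _ = |K| + B₁*(1+2*α)^2 := by
          rw [_root_.abs_of_nonneg (show (0:ℝ) ≤ B₁*(1+2*α)^2 by positivity)]
  have hDpos : 0 < |D| := abs_pos.mpr hne
  have htD : t * |D| ≤ 4 * B₁^3 :=
    le_trans (mul_le_mul_of_nonneg_left hDK ht0) hmain
  -- conclude
  have htc : ‖tc f 2‖ = ‖A‖ / 2 := by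
    rw [tc, S11.id2, norm_div]
    norm_num [Nat.factorial]
    rfl
  rw [htc]
  have hsq : (‖A‖/2)^2 ≤ (B₁ * Real.sqrt B₁ / Real.sqrt |D|)^2 := by
    have hr : (B₁ * Real.sqrt B₁ / Real.sqrt |D|)^2 = B₁^3 / |D| := by
      rw [div_pow, mul_pow, Real.sq_sqrt hB₁pos.le, Real.sq_sqrt hDpos.le]
      ring
    rw [hr]
    rw [div_pow, le_div_iff₀ hDpos]
    nlinarith [htD]
  have hrhs0 : 0 ≤ B₁ * Real.sqrt B₁ / Real.sqrt |D| := by positivity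
  nlinarith [hsq, hrhs0, norm_nonneg A, abs_nonneg (‖A‖/2)]
end

section
/- Let f∈ST_σ(α,φ) with α≥0 (as above: f bi-univalent, zf'/f+αz²f''/f ≺ φ and the same for g=f⁻¹, φ(z)=1+B₁z+B₂z²+⋯, B₁>0). Then |a₃| ≤ (B₁+|B₂−B₁|)/(1+4α). -/
open Metric Complex Filter Topology



private lemma evAn_deriv {h : ℂ → ℂ} (hh : ∀ᶠ z in 𝓝 (0:ℂ), AnalyticAt ℂ h z) :
    ∀ᶠ z in 𝓝 (0:ℂ), AnalyticAt ℂ (deriv h) z := by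
  obtain ⟨s, hs, hsub⟩ := hh.exists_mem
  exact eventually_of_mem hs (fun z hz =>
    (AnalyticOnNhd.deriv (fun x hx => hsub x hx)) z hz)

private lemma evHasDeriv {h : ℂ → ℂ} (hh : ∀ᶠ z in 𝓝 (0:ℂ), AnalyticAt ℂ h z) :
    ∀ᶠ z in 𝓝 (0:ℂ), HasDerivAt h (deriv h z) z :=
  hh.mono fun z hz => hz.differentiableAt.hasDerivAt

private lemma coeff_eqs (F U φ : ℂ → ℂ) (al b1 b2 : ℂ)
    (hF : AnalyticAt ℂ F 0) (hU : AnalyticAt ℂ U 0) (hφ : AnalyticAt ℂ φ 0)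
    (hF0 : F 0 = 0) (hF1 : deriv F 0 = 1) (hU0 : U 0 = 0) (hφ0 : φ 0 = 1)
    (hb1 : deriv φ 0 = b1) (hb2 : iteratedDeriv 2 φ 0 = 2 * b2)
    (heq : ∀ᶠ z in 𝓝 (0:ℂ), z * deriv F z + al * z ^ 2 * iteratedDeriv 2 F z = φ (U z) * F z) :
    (1 + 2*al) * iteratedDeriv 2 F 0 = 2 * b1 * deriv U 0 ∧
    (2 + 6*al) * iteratedDeriv 3 F 0 =
      3 * b1 * deriv U 0 * iteratedDeriv 2 F 0 + 6 * b2 * (deriv U 0)^2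
        + 3 * b1 * iteratedDeriv 2 U 0 := by
  have h2F : iteratedDeriv 2 F = deriv (deriv F) := by
    rw [iteratedDeriv_succ, iteratedDeriv_one]
  have h3F : iteratedDeriv 3 F = deriv (deriv (deriv F)) := by
    rw [iteratedDeriv_succ, h2F]
  have h2U : iteratedDeriv 2 U = deriv (deriv U) := by
    rw [iteratedDeriv_succ, iteratedDeriv_one]
  have h2φ : deriv (deriv φ) 0 = 2 * b2 := by
    rw [← hb2, iteratedDeriv_succ, iteratedDeriv_one]
  -- eventual analyticity
  have aF : ∀ᶠ z in 𝓝 (0:ℂ), AnalyticAt ℂ F z := hF.eventually_analyticAt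
  have aF₁ := evAn_deriv aF
  have aF₂ := evAn_deriv aF₁
  have aF₃ := evAn_deriv aF₂
  have aF₄ := evAn_deriv aF₃
  have aU : ∀ᶠ z in 𝓝 (0:ℂ), AnalyticAt ℂ U z := hU.eventually_analyticAt
  have aU₁ := evAn_deriv aU
  have aU₂ := evAn_deriv aU₁
  have aφ : ∀ᶠ z in 𝓝 (0:ℂ), AnalyticAt ℂ φ z := hφ.eventually_analyticAt
  have aφ₁ := evAn_deriv aφ
  have aφ₂ := evAn_deriv aφ₁
  -- eventual HasDerivAt
  have dF := evHasDeriv aF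
  have dF₁ := evHasDeriv aF₁
  have dF₂ := evHasDeriv aF₂
  have dF₃ := evHasDeriv aF₃
  have dU := evHasDeriv aU
  have dU₁ := evHasDeriv aU₁
  have hUc : Tendsto U (𝓝 (0:ℂ)) (𝓝 (0:ℂ)) := by
    have := hU.continuousAt
    rwa [ContinuousAt, hU0] at this
  have dφU : ∀ᶠ z in 𝓝 (0:ℂ), HasDerivAt φ (deriv φ (U z)) (U z) :=
    hUc.eventually (evHasDeriv aφ)
  have dφ₁U : ∀ᶠ z in 𝓝 (0:ℂ), HasDerivAt (deriv φ) (deriv (deriv φ) (U z)) (U z) :=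
    hUc.eventually (evHasDeriv aφ₁)
  -- the equation as EventuallyEq
  have E0 : (fun z => z * deriv F z + al * z ^ 2 * deriv (deriv F) z)
      =ᶠ[𝓝 (0:ℂ)] (fun z => φ (U z) * F z) := by
    have h := heq; simp only [h2F] at h; exact h
  -- first derivatives
  have hL1 : ∀ᶠ z in 𝓝 (0:ℂ), HasDerivAt
      (fun w => w * deriv F w + al * w ^ 2 * deriv (deriv F) w)
      ((deriv F z + z * deriv (deriv F) z)
        + al * (2 * z * deriv (deriv F) z + z ^ 2 * deriv (deriv (deriv F)) z)) z := by
    filter_upwards [dF₁, dF₂] with z h1 h2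
    have := ((hasDerivAt_id z).mul h1).add (((hasDerivAt_pow 2 z).const_mul al).mul h2)
    convert this using 1
    · rfl
    · rfl
    · funext y; simp only [Pi.add_apply, Pi.mul_apply, Function.comp_apply, id]
    simp only [id_eq]
    push_cast
    ring
  have hR1 : ∀ᶠ z in 𝓝 (0:ℂ), HasDerivAt (fun w => φ (U w) * F w)
      ((deriv φ (U z) * deriv U z) * F z + φ (U z) * deriv F z) z := by
    filter_upwards [dφU, dU, dF] with z h1 h2 h3
    exact (h1.comp z h2).mul h3
  have eL1 : deriv (fun w => w * deriv F w + al * w ^ 2 * deriv (deriv F) w)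
      =ᶠ[𝓝 (0:ℂ)] (fun z => (deriv F z + z * deriv (deriv F) z)
        + al * (2 * z * deriv (deriv F) z + z ^ 2 * deriv (deriv (deriv F)) z)) :=
    hL1.mono fun _ h => h.deriv
  have eR1 : deriv (fun w => φ (U w) * F w)
      =ᶠ[𝓝 (0:ℂ)] (fun z => (deriv φ (U z) * deriv U z) * F z + φ (U z) * deriv F z) :=
    hR1.mono fun _ h => h.deriv
  have E1 : (fun z => (deriv F z + z * deriv (deriv F) z)
        + al * (2 * z * deriv (deriv F) z + z ^ 2 * deriv (deriv (deriv F)) z))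
      =ᶠ[𝓝 (0:ℂ)] (fun z => (deriv φ (U z) * deriv U z) * F z + φ (U z) * deriv F z) :=
    eL1.symm.trans (E0.deriv.trans eR1)
  -- second derivatives
  have hL2 : ∀ᶠ z in 𝓝 (0:ℂ), HasDerivAt
      (fun w => (deriv F w + w * deriv (deriv F) w)
        + al * (2 * w * deriv (deriv F) w + w ^ 2 * deriv (deriv (deriv F)) w))
      ((2 * deriv (deriv F) z + z * deriv (deriv (deriv F)) z)
        + al * ((2 * deriv (deriv F) z + 4 * z * deriv (deriv (deriv F)) z)
          + z ^ 2 * deriv (deriv (deriv (deriv F))) z)) z := by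
    filter_upwards [dF₁, dF₂, dF₃] with z h1 h2 h3
    have := (h1.add ((hasDerivAt_id z).mul h2)).add
      (((((hasDerivAt_id z).const_mul (2:ℂ)).mul h2).add
        ((hasDerivAt_pow 2 z).mul h3)).const_mul al)
    convert this using 1
    · rfl
    · rfl
    · funext y; simp only [Pi.add_apply, Pi.mul_apply, Function.comp_apply, id]
    simp only [id_eq]
    push_cast
    ring
  have hR2 : ∀ᶠ z in 𝓝 (0:ℂ), HasDerivAt
      (fun w => (deriv φ (U w) * deriv U w) * F w + φ (U w) * deriv F w)
      ((((deriv (deriv φ) (U z) * deriv U z) * deriv U z + deriv φ (U z) * deriv (deriv U) z) * F z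
          + (deriv φ (U z) * deriv U z) * deriv F z)
        + ((deriv φ (U z) * deriv U z) * deriv F z + φ (U z) * deriv (deriv F) z)) z := by
    filter_upwards [dφU, dφ₁U, dU, dU₁, dF, dF₁] with z h1 h1' h2 h2' h3 h3'
    exact ((((h1'.comp z h2).mul h2').mul h3).add ((h1.comp z h2).mul h3'))
  have eL2 : deriv (fun w => (deriv F w + w * deriv (deriv F) w)
        + al * (2 * w * deriv (deriv F) w + w ^ 2 * deriv (deriv (deriv F)) w))
      =ᶠ[𝓝 (0:ℂ)] (fun z => (2 * deriv (deriv F) z + z * deriv (deriv (deriv F)) z)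
        + al * ((2 * deriv (deriv F) z + 4 * z * deriv (deriv (deriv F)) z)
          + z ^ 2 * deriv (deriv (deriv (deriv F))) z)) :=
    hL2.mono fun _ h => h.deriv
  have eR2 : deriv (fun w => (deriv φ (U w) * deriv U w) * F w + φ (U w) * deriv F w)
      =ᶠ[𝓝 (0:ℂ)] (fun z =>
        (((deriv (deriv φ) (U z) * deriv U z) * deriv U z + deriv φ (U z) * deriv (deriv U) z) * F z
          + (deriv φ (U z) * deriv U z) * deriv F z)
        + ((deriv φ (U z) * deriv U z) * deriv F z + φ (U z) * deriv (deriv F) z)) :=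
    hR2.mono fun _ h => h.deriv
  have E2 : (fun z => (2 * deriv (deriv F) z + z * deriv (deriv (deriv F)) z)
        + al * ((2 * deriv (deriv F) z + 4 * z * deriv (deriv (deriv F)) z)
          + z ^ 2 * deriv (deriv (deriv (deriv F))) z))
      =ᶠ[𝓝 (0:ℂ)] (fun z =>
        (((deriv (deriv φ) (U z) * deriv U z) * deriv U z + deriv φ (U z) * deriv (deriv U) z) * F z
          + (deriv φ (U z) * deriv U z) * deriv F z)
        + ((deriv φ (U z) * deriv U z) * deriv F z + φ (U z) * deriv (deriv F) z)) :=
    eL2.symm.trans (E1.deriv.trans eR2)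
  have eq1 := E2.self_of_nhds
  -- third derivative values at 0
  have dF0 := dF.self_of_nhds
  have dF₁0 := dF₁.self_of_nhds
  have dF₂0 := dF₂.self_of_nhds
  have dF₃0 := dF₃.self_of_nhds
  have dF₄0 := (evHasDeriv aF₄).self_of_nhds
  have dU0 := dU.self_of_nhds
  have dU₁0 := dU₁.self_of_nhds
  have dφU0 := dφU.self_of_nhds
  have dφ₁U0 := dφ₁U.self_of_nhds
  have eL3 : deriv (fun z => (2 * deriv (deriv F) z + z * deriv (deriv (deriv F)) z)
        + al * ((2 * deriv (deriv F) z + 4 * z * deriv (deriv (deriv F)) z)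
          + z ^ 2 * deriv (deriv (deriv (deriv F))) z)) 0
      = 3 * deriv (deriv (deriv F)) 0 + 6 * al * deriv (deriv (deriv F)) 0 := by
    apply HasDerivAt.deriv
    have := ((dF₂0.const_mul (2:ℂ)).add ((hasDerivAt_id 0).mul dF₃0)).add
      ((((dF₂0.const_mul (2:ℂ)).add (((hasDerivAt_id 0).const_mul (4:ℂ)).mul dF₃0)).add
        ((hasDerivAt_pow 2 0).mul dF₄0)).const_mul al)
    convert this using 1
    · funext y; simp only [Pi.add_apply, Pi.mul_apply, Function.comp_apply, id]
    simp only [id_eq]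
    push_cast
    ring
  have c0 : AnalyticAt ℂ (deriv φ) (U 0) := by rw [hU0]; exact aφ₁.self_of_nhds
  have c1 : AnalyticAt ℂ (deriv (deriv φ)) (U 0) := by rw [hU0]; exact aφ₂.self_of_nhds
  have aψ2 : AnalyticAt ℂ (fun w => (deriv (deriv φ) (U w) * deriv U w) * deriv U w
      + deriv φ (U w) * deriv (deriv U) w) 0 :=
    (((c1.comp hU).mul aU₁.self_of_nhds).mul aU₁.self_of_nhds).add
      ((c0.comp hU).mul aU₂.self_of_nhds)
  have hψ0 : HasDerivAt (fun w => φ (U w)) (deriv φ (U 0) * deriv U 0) 0 := dφU0.comp 0 dU0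
  have hψ1 : HasDerivAt (fun w => deriv φ (U w) * deriv U w)
      ((deriv (deriv φ) (U 0) * deriv U 0) * deriv U 0 + deriv φ (U 0) * deriv (deriv U) 0) 0 :=
    (dφ₁U0.comp 0 dU0).mul dU₁0
  have hdψ2 : HasDerivAt (fun w => (deriv (deriv φ) (U w) * deriv U w) * deriv U w
      + deriv φ (U w) * deriv (deriv U) w)
      (deriv (fun w => (deriv (deriv φ) (U w) * deriv U w) * deriv U w
        + deriv φ (U w) * deriv (deriv U) w) 0) 0 :=
    aψ2.differentiableAt.hasDerivAt
  have eR3 : deriv (fun z =>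
        (((deriv (deriv φ) (U z) * deriv U z) * deriv U z + deriv φ (U z) * deriv (deriv U) z) * F z
          + (deriv φ (U z) * deriv U z) * deriv F z)
        + ((deriv φ (U z) * deriv U z) * deriv F z + φ (U z) * deriv (deriv F) z)) 0
      = deriv (fun w => (deriv (deriv φ) (U w) * deriv U w) * deriv U w
            + deriv φ (U w) * deriv (deriv U) w) 0 * F 0
        + 3 * ((deriv (deriv φ) (U 0) * deriv U 0) * deriv U 0 + deriv φ (U 0) * deriv (deriv U) 0)
            * deriv F 0
        + 3 * (deriv φ (U 0) * deriv U 0) * deriv (deriv F) 0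
        + φ (U 0) * deriv (deriv (deriv F)) 0 := by
    apply HasDerivAt.deriv
    have := ((hdψ2.mul dF0).add (hψ1.mul dF₁0)).add ((hψ1.mul dF₁0).add (hψ0.mul dF₂0))
    convert this using 1
    · funext y; simp only [Pi.add_apply, Pi.mul_apply, Function.comp_apply, id]
    beta_reduce
    ring
  have eqd := (E2.deriv).self_of_nhds
  rw [eL3, eR3] at eqd
  simp only [hU0, hF0, hF1, hφ0, hb1, h2φ, mul_zero, zero_mul, mul_one, one_mul,
    add_zero, zero_add] at eq1 eqd
  rw [h2F, h3F, h2U]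
  constructor
  · linear_combination eq1
  · linear_combination eqd

private lemma inv_coeffs (f g : ℂ → ℂ)
    (hfa : AnalyticAt ℂ f 0) (hga : AnalyticAt ℂ g 0)
    (hf0 : f 0 = 0) (hf1 : deriv f 0 = 1)
    (hinv : ∀ᶠ z in 𝓝 (0:ℂ), g (f z) = z) :
    g 0 = 0 ∧ deriv g 0 = 1 ∧ iteratedDeriv 2 g 0 = - iteratedDeriv 2 f 0 ∧
      iteratedDeriv 3 g 0 = 3 * (iteratedDeriv 2 f 0)^2 - iteratedDeriv 3 f 0 := by
  have h2f : iteratedDeriv 2 f = deriv (deriv f) := by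
    rw [iteratedDeriv_succ, iteratedDeriv_one]
  have h3f : iteratedDeriv 3 f = deriv (deriv (deriv f)) := by rw [iteratedDeriv_succ, h2f]
  have h2g : iteratedDeriv 2 g = deriv (deriv g) := by
    rw [iteratedDeriv_succ, iteratedDeriv_one]
  have h3g : iteratedDeriv 3 g = deriv (deriv (deriv g)) := by rw [iteratedDeriv_succ, h2g]
  have hg0 : g 0 = 0 := by have := hinv.self_of_nhds; rwa [hf0] at this
  have af : ∀ᶠ z in 𝓝 (0:ℂ), AnalyticAt ℂ f z := hfa.eventually_analyticAt
  have af₁ := evAn_deriv af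
  have af₂ := evAn_deriv af₁
  have af₃ := evAn_deriv af₂
  have ag : ∀ᶠ z in 𝓝 (0:ℂ), AnalyticAt ℂ g z := hga.eventually_analyticAt
  have ag₁ := evAn_deriv ag
  have ag₂ := evAn_deriv ag₁
  have df := evHasDeriv af
  have df₁ := evHasDeriv af₁
  have df₂ := evHasDeriv af₂
  have hfc : Tendsto f (𝓝 (0:ℂ)) (𝓝 (0:ℂ)) := by
    have := hfa.continuousAt
    rwa [ContinuousAt, hf0] at this
  have dgf : ∀ᶠ z in 𝓝 (0:ℂ), HasDerivAt g (deriv g (f z)) (f z) :=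
    hfc.eventually (evHasDeriv ag)
  have dg₁f : ∀ᶠ z in 𝓝 (0:ℂ), HasDerivAt (deriv g) (deriv (deriv g) (f z)) (f z) :=
    hfc.eventually (evHasDeriv ag₁)
  have dg₂f : ∀ᶠ z in 𝓝 (0:ℂ),
      HasDerivAt (deriv (deriv g)) (deriv (deriv (deriv g)) (f z)) (f z) :=
    hfc.eventually (evHasDeriv ag₂)
  have C0 : (fun z => g (f z)) =ᶠ[𝓝 (0:ℂ)] (fun z => z) := hinv
  have hGF1 : ∀ᶠ z in 𝓝 (0:ℂ), HasDerivAt (fun w => g (f w)) (deriv g (f z) * deriv f z) z := by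
    filter_upwards [dgf, df] with z h1 h2
    exact h1.comp z h2
  have eid : deriv (fun z : ℂ => z) = fun _ => (1:ℂ) := by
    funext x; exact deriv_id x
  have e1 : deriv (fun w => g (f w)) =ᶠ[𝓝 (0:ℂ)] (fun z => deriv g (f z) * deriv f z) :=
    hGF1.mono fun _ h => h.deriv
  have C1 : (fun z => deriv g (f z) * deriv f z) =ᶠ[𝓝 (0:ℂ)] (fun _ => (1:ℂ)) :=
    e1.symm.trans (C0.deriv.trans (by rw [eid]))
  have hg1 : deriv g 0 = 1 := by
    have := C1.self_of_nhds
    simp only [hf0, hf1, mul_one] at this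
    exact this
  have hGF2 : ∀ᶠ z in 𝓝 (0:ℂ), HasDerivAt (fun w => deriv g (f w) * deriv f w)
      ((deriv (deriv g) (f z) * deriv f z) * deriv f z + deriv g (f z) * deriv (deriv f) z) z := by
    filter_upwards [dg₁f, df, df₁] with z h1 h2 h3
    exact (h1.comp z h2).mul h3
  have econst : deriv (fun _ : ℂ => (1:ℂ)) = fun _ => (0:ℂ) := by
    funext x; exact deriv_const x 1
  have e2 : deriv (fun w => deriv g (f w) * deriv f w) =ᶠ[𝓝 (0:ℂ)]
      (fun z => (deriv (deriv g) (f z) * deriv f z) * deriv f z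
        + deriv g (f z) * deriv (deriv f) z) := hGF2.mono fun _ h => h.deriv
  have C2 : (fun z => (deriv (deriv g) (f z) * deriv f z) * deriv f z
        + deriv g (f z) * deriv (deriv f) z) =ᶠ[𝓝 (0:ℂ)] (fun _ => (0:ℂ)) :=
    e2.symm.trans (C1.deriv.trans (by rw [econst]))
  have eq2 := C2.self_of_nhds
  simp only [hf0, hf1, hg1, mul_one, one_mul] at eq2
  -- third order
  have df0 := df.self_of_nhds
  have df₁0 := df₁.self_of_nhds
  have df₂0 := df₂.self_of_nhds
  have dgf0 := dgf.self_of_nhds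
  have dg₁f0 := dg₁f.self_of_nhds
  have dg₂f0 := dg₂f.self_of_nhds
  have eL : deriv (fun w => (deriv (deriv g) (f w) * deriv f w) * deriv f w
        + deriv g (f w) * deriv (deriv f) w) 0
      = deriv (deriv (deriv g)) (f 0) * deriv f 0 ^ 3
        + 3 * deriv (deriv g) (f 0) * deriv f 0 * deriv (deriv f) 0
        + deriv g (f 0) * deriv (deriv (deriv f)) 0 := by
    apply HasDerivAt.deriv
    have := ((((dg₂f0.comp 0 df0).mul df₁0).mul df₁0).add ((dg₁f0.comp 0 df0).mul df₂0))
    convert this using 1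
    · funext y; simp only [Pi.add_apply, Pi.mul_apply, Function.comp_apply, id]
    simp only [Function.comp_apply, Pi.mul_apply]
    beta_reduce
    ring
  have eq3 := C2.deriv.self_of_nhds
  rw [eL] at eq3
  simp only [hf0, hf1, hg1, mul_one, one_mul, one_pow, deriv_const'] at eq3
  refine ⟨hg0, hg1, ?_, ?_⟩
  · rw [h2g, h2f]; linear_combination eq2
  · rw [h3g, h2f, h3f]
    linear_combination eq3 - 3 * deriv (deriv f) 0 * eq2



private lemma mobius_lt {a ζ : ℂ} (ha : ‖a‖ < 1) (hζ : ‖ζ‖ < 1) :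
    ‖(ζ - a) / (1 - (starRingEnd ℂ) a * ζ)‖ < 1 := by
  have ha2 : a.re ^ 2 + a.im ^ 2 < 1 := by
    have := Complex.sq_norm a
    have h1 : ‖a‖ < 1 := ha
    nlinarith [Complex.normSq_apply a, norm_nonneg a]
  have hζ2 : ζ.re ^ 2 + ζ.im ^ 2 < 1 := by
    have := Complex.sq_norm ζ
    have h1 : ‖ζ‖ < 1 := hζ
    nlinarith [Complex.normSq_apply ζ, norm_nonneg ζ]
  have hden : ‖ζ - a‖ ^ 2 < ‖1 - (starRingEnd ℂ) a * ζ‖ ^ 2 := by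
    have e1 : ‖ζ - a‖ ^ 2 = Complex.normSq (ζ - a) := by
      exact Complex.sq_norm _
    have e2 : ‖1 - (starRingEnd ℂ) a * ζ‖ ^ 2 = Complex.normSq (1 - (starRingEnd ℂ) a * ζ) := by
      exact Complex.sq_norm _
    rw [e1, e2]
    simp only [Complex.normSq_apply, Complex.sub_re, Complex.sub_im, Complex.mul_re,
      Complex.mul_im, Complex.one_re, Complex.one_im, Complex.conj_re, Complex.conj_im]
    nlinarith [mul_pos (by linarith : (0:ℝ) < 1 - (a.re^2 + a.im^2))
      (by linarith : (0:ℝ) < 1 - (ζ.re^2 + ζ.im^2))]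
  have hne : ‖1 - (starRingEnd ℂ) a * ζ‖ ≠ 0 := by
    intro h
    rw [h] at hden
    nlinarith [norm_nonneg (ζ - a)]
  have hpos : 0 < ‖1 - (starRingEnd ℂ) a * ζ‖ := lt_of_le_of_ne (norm_nonneg _) (Ne.symm hne)
  rw [norm_div, div_lt_one hpos]
  nlinarith [norm_nonneg (ζ - a), norm_nonneg (1 - (starRingEnd ℂ) a * ζ)]

private lemma schwarz_two (u : ℂ → ℂ) (hu : AnalyticOnNhd ℂ u (ball (0:ℂ) 1))
    (hu0 : u 0 = 0) (hmap : ∀ z ∈ ball (0:ℂ) 1, u z ∈ ball (0:ℂ) 1) :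
    ‖iteratedDeriv 2 u 0‖ / 2 ≤ 1 - ‖deriv u 0‖ ^ 2 := by
  have hud : DifferentiableOn ℂ u (ball (0:ℂ) 1) :=
    fun z hz => ((hu z hz).differentiableAt).differentiableWithinAt
  have hmapsTo : Set.MapsTo u (ball (0:ℂ) 1) (ball (u 0) 1) := by
    rw [hu0]; exact fun z hz => hmap z hz
  set w : ℂ → ℂ := dslope u 0 with hw_def
  have hwb : ∀ z ∈ ball (0:ℂ) 1, ‖w z‖ ≤ 1 := by
    intro z hz
    have := Complex.norm_dslope_le_div_of_mapsTo_ball hud (hmapsTo.mono_right ball_subset_closedBall) hz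
    simpa using this
  obtain ⟨p, hp⟩ := hu 0 (mem_ball_self one_pos)
  have hw_series : HasFPowerSeriesAt w p.fslope 0 := hp.has_fpower_series_dslope_fslope
  have hw0 : w 0 = deriv u 0 := dslope_same u 0
  have hderivw : deriv w 0 = p.coeff 2 := by
    rw [hw_series.deriv]
    exact FormalMultilinearSeries.coeff_fslope
  have hiter2 : iteratedDeriv 2 u 0 = 2 * p.coeff 2 := by
    obtain ⟨r, hball⟩ := hp
    have h := hball.factorial_smul (1:ℂ) 2
    rw [← iteratedDeriv_eq_iteratedFDeriv] at h
    rw [← h, show Nat.factorial 2 = 2 from rfl, nsmul_eq_mul]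
    norm_num
  have hw00 : ‖w 0‖ ≤ 1 := hwb 0 (mem_ball_self one_pos)
  -- differentiability of w on the ball
  have hwd : DifferentiableOn ℂ w (ball (0:ℂ) 1) := by
    intro z hz
    rcases eq_or_ne z 0 with rfl | hz0
    · exact hw_series.differentiableAt.differentiableWithinAt
    · exact ((differentiableAt_dslope_of_ne hz0).mpr
        ((hu z hz).differentiableAt)).differentiableWithinAt
  -- main bound for each s < 1
  have key : ∀ s : ℝ, s ∈ Set.Ioo (0:ℝ) 1 →
      s^2 * ‖deriv w 0‖ ≤ 1 - s^2 * ‖w 0‖^2 := by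
    intro s hs
    obtain ⟨hs0, hs1⟩ := hs
    set a : ℂ := (s:ℂ) * w 0 with ha_def
    have hanorm : ‖a‖ ≤ s := by
      rw [ha_def, norm_mul]
      calc ‖(s:ℂ)‖ * ‖w 0‖ ≤ ‖(s:ℂ)‖ * 1 := by
            exact mul_le_mul_of_nonneg_left hw00 (norm_nonneg _)
        _ = s := by simp [abs_of_pos hs0]
    have ha1 : ‖a‖ < 1 := lt_of_le_of_lt hanorm hs1
    set W : ℂ → ℂ := fun z => (s:ℂ) * w ((s:ℂ) * z) with hW_def
    have hWmem : ∀ z ∈ ball (0:ℂ) 1, (s:ℂ) * z ∈ ball (0:ℂ) 1 := by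
      intro z hz
      rw [mem_ball_zero_iff] at hz ⊢
      rw [norm_mul]
      calc ‖(s:ℂ)‖ * ‖z‖ < ‖(s:ℂ)‖ * 1 := by
            refine mul_lt_mul_of_pos_left hz ?_
            simpa [abs_of_pos hs0] using hs0
        _ = s := by simp [abs_of_pos hs0]
        _ < 1 := hs1
    have hWd : DifferentiableOn ℂ W (ball (0:ℂ) 1) := by
      intro z hz
      have h1 : DifferentiableWithinAt ℂ (fun z : ℂ => (s:ℂ) * z) (ball 0 1) z :=
        (differentiableWithinAt_id.const_mul _)
      have h2 : DifferentiableAt ℂ w ((s:ℂ) * z) :=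
        (hwd ((s:ℂ) * z) (hWmem z hz)).differentiableAt
          (isOpen_ball.mem_nhds (hWmem z hz))
      exact ((h2.comp_differentiableWithinAt z h1).const_mul _)
    have hWb : ∀ z ∈ ball (0:ℂ) 1, ‖W z‖ ≤ s := by
      intro z hz
      rw [hW_def]
      simp only [norm_mul]
      calc ‖(s:ℂ)‖ * ‖w ((s:ℂ)*z)‖ ≤ ‖(s:ℂ)‖ * 1 :=
            mul_le_mul_of_nonneg_left (hwb _ (hWmem z hz)) (norm_nonneg _)
        _ = s := by simp [abs_of_pos hs0]
    have hW0 : W 0 = a := by rw [hW_def, ha_def]; simp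
    have hden_ne : ∀ ζ : ℂ, ‖ζ‖ < 1 → 1 - (starRingEnd ℂ) a * ζ ≠ 0 := by
      intro ζ hζ hzero
      have h1 : (1:ℂ) = (starRingEnd ℂ) a * ζ := sub_eq_zero.mp hzero
      have h2 : ‖(starRingEnd ℂ) a * ζ‖ < 1 := by
        rw [norm_mul]
        have hca : ‖(starRingEnd ℂ) a‖ = ‖a‖ := by
          rw [show (starRingEnd ℂ) a = star a from rfl, norm_star]
        rw [hca]
        nlinarith [norm_nonneg a, norm_nonneg ζ]
      rw [← h1] at h2
      simp at h2
    set h : ℂ → ℂ := fun z => (W z - a) / (1 - (starRingEnd ℂ) a * W z) with hh_def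
    have hhd : DifferentiableOn ℂ h (ball (0:ℂ) 1) := by
      intro z hz
      have hWz : ‖W z‖ < 1 := lt_of_le_of_lt (hWb z hz) hs1
      exact ((hWd z hz).sub_const a).div (((hWd z hz).const_mul _).const_sub 1)
        (hden_ne _ hWz)
    have hh0 : h 0 = 0 := by rw [hh_def]; simp [hW0]
    have hhmaps : Set.MapsTo h (ball (0:ℂ) 1) (ball (h 0) 1) := by
      rw [hh0]
      intro z hz
      rw [mem_ball_zero_iff]
      exact mobius_lt ha1 (lt_of_le_of_lt (hWb z hz) hs1)
    have hschwarz : ‖deriv h 0‖ ≤ 1 / 1 :=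
      Complex.norm_deriv_le_div_of_mapsTo_ball hhd (hhmaps.mono_right ball_subset_closedBall) one_pos
    -- compute deriv h 0
    have hwdiff0 : HasDerivAt w (deriv w 0) 0 := hw_series.differentiableAt.hasDerivAt
    have hWhas : HasDerivAt W ((s:ℂ) * (deriv w 0 * (s:ℂ))) 0 := by
      have hinner : HasDerivAt (fun z : ℂ => (s:ℂ) * z) ((s:ℂ)) 0 := by
        simpa using (hasDerivAt_id (0:ℂ)).const_mul (s:ℂ)
      have houter : HasDerivAt w (deriv w 0) ((s:ℂ) * 0) := by
        rw [mul_zero]; exact hwdiff0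
      exact (houter.comp 0 hinner).const_mul (s:ℂ)
    have hnum : HasDerivAt (fun z => W z - a) ((s:ℂ) * (deriv w 0 * (s:ℂ))) 0 :=
      hWhas.sub_const a
    have hdenD : HasDerivAt (fun z => 1 - (starRingEnd ℂ) a * W z)
        (-((starRingEnd ℂ) a * ((s:ℂ) * (deriv w 0 * (s:ℂ))))) 0 :=
      (hWhas.const_mul _).const_sub 1
    have hdenne0 : (1 - (starRingEnd ℂ) a * W 0) ≠ 0 := by
      rw [hW0]; exact hden_ne a ha1
    have hhderiv := hnum.div hdenD hdenne0
    have hca : (starRingEnd ℂ) a * a = ((Complex.normSq a : ℝ) : ℂ) := by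
      rw [mul_comm, Complex.mul_conj]
    have hnsqlt : Complex.normSq a < 1 := by
      have : Complex.normSq a = ‖a‖^2 := by
        rw [Complex.normSq_eq_norm_sq]
      nlinarith [norm_nonneg a]
    have hval : deriv h 0 = ((s:ℂ) * (deriv w 0 * (s:ℂ))) / (1 - (starRingEnd ℂ) a * a) := by
      rw [show h = (fun z => W z - a) / (fun z => 1 - (starRingEnd ℂ) a * W z) from rfl,
        hhderiv.deriv, hW0]
      have hne : (1 : ℂ) - (starRingEnd ℂ) a * a ≠ 0 := by
        rw [hca]
        intro hzero
        have : ((1 - Complex.normSq a : ℝ) : ℂ) = 0 := by push_cast; linear_combination hzero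
        rw [Complex.ofReal_eq_zero] at this
        linarith
      field_simp
      ring
    have hnormden : ‖(1:ℂ) - (starRingEnd ℂ) a * a‖ = 1 - Complex.normSq a := by
      rw [hca, show (1:ℂ) - ((Complex.normSq a : ℝ):ℂ) = ((1 - Complex.normSq a : ℝ) : ℂ) by push_cast; ring]
      rw [Complex.norm_real, Real.norm_eq_abs, abs_of_pos (by linarith)]
    have hsnorm : ‖(s:ℂ)‖ = s := by
      rw [Complex.norm_real, Real.norm_eq_abs, abs_of_pos hs0]
    have hineq : s^2 * ‖deriv w 0‖ / (1 - Complex.normSq a) ≤ 1 := by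
      have := hschwarz
      rw [hval, norm_div, norm_mul, norm_mul, hsnorm, hnormden] at this
      calc s^2 * ‖deriv w 0‖ / (1 - Complex.normSq a)
          = s * (‖deriv w 0‖ * s) / (1 - Complex.normSq a) := by ring
        _ ≤ 1 / 1 := this
        _ = 1 := by norm_num
    have hnsq : Complex.normSq a = s^2 * ‖w 0‖^2 := by
      have h1 : ‖a‖ = s * ‖w 0‖ := by rw [ha_def, norm_mul, hsnorm]
      have h2 : Complex.normSq a = ‖a‖^2 := by
        rw [Complex.normSq_eq_norm_sq]
      rw [h2, h1]; ring
    have hpos : 0 < 1 - Complex.normSq a := by linarith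
    rw [div_le_one hpos] at hineq
    rw [hnsq] at hineq
    linarith
  -- pass to the limit s → 1⁻
  have hlim : Tendsto (fun s : ℝ => s^2 * ‖deriv w 0‖ + s^2 * ‖w 0‖^2) (𝓝[<] (1:ℝ))
      (𝓝 ((1:ℝ)^2 * ‖deriv w 0‖ + (1:ℝ)^2 * ‖w 0‖^2)) := by
    apply Tendsto.mono_left _ nhdsWithin_le_nhds
    exact Continuous.tendsto (by continuity) 1
  have hle : ‖deriv w 0‖ + ‖w 0‖^2 ≤ 1 := by
    have hev : ∀ᶠ s in 𝓝[<] (1:ℝ),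
        (fun s : ℝ => s^2 * ‖deriv w 0‖ + s^2 * ‖w 0‖^2) s ≤ 1 := by
      filter_upwards [Ioo_mem_nhdsLT_of_mem (show (1:ℝ) ∈ Set.Ioc (0:ℝ) 1 from
        ⟨zero_lt_one, le_refl 1⟩)] with s hs
      have := key s hs
      show s^2 * ‖deriv w 0‖ + s^2 * ‖w 0‖^2 ≤ 1
      linarith
    have := le_of_tendsto hlim hev
    nlinarith [this]
  rw [hiter2, ← hw0]
  have : ‖(2:ℂ) * p.coeff 2‖ = 2 * ‖p.coeff 2‖ := by
    rw [norm_mul]; norm_num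
  rw [this, ← hderivw]
  linarith



theorem stmt12 (f g u v φ : ℂ → ℂ) (α B₁ B₂ : ℝ) (hα : 0 ≤ α)
    (hf : AnalyticOn ℂ f (ball (0:ℂ) 1)) (hfinj : Set.InjOn f (ball (0:ℂ) 1))
    (hf0 : f 0 = 0) (hf1 : deriv f 0 = 1)
    (hg : AnalyticOn ℂ g (ball (0:ℂ) 1)) (hginj : Set.InjOn g (ball (0:ℂ) 1))
    (hinv : ∀ᶠ z in 𝓝 (0:ℂ), g (f z) = z)
    (hu : AnalyticOn ℂ u (ball (0:ℂ) 1)) (humap : ∀ z ∈ ball (0:ℂ) 1, u z ∈ ball (0:ℂ) 1) (hu0 : u 0 = 0)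
    (hv : AnalyticOn ℂ v (ball (0:ℂ) 1)) (hvmap : ∀ w ∈ ball (0:ℂ) 1, v w ∈ ball (0:ℂ) 1) (hv0 : v 0 = 0)
    (hφ : AnalyticOn ℂ φ (ball (0:ℂ) 1)) (hφ0 : φ 0 = 1)
    (hB₁ : tc φ 1 = (B₁ : ℂ)) (hB₂ : tc φ 2 = (B₂ : ℂ)) (hB₁pos : 0 < B₁)
    (hfu : ∀ z ∈ ball (0:ℂ) 1, z ≠ 0 →
      z * deriv f z / f z + (α : ℂ) * z ^ 2 * iteratedDeriv 2 f z / f z = φ (u z))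
    (hgv : ∀ w ∈ ball (0:ℂ) 1, w ≠ 0 →
      w * deriv g w / g w + (α : ℂ) * w ^ 2 * iteratedDeriv 2 g w / g w = φ (v w)) :
    ‖tc f 3‖ ≤ (B₁ + |B₂ - B₁|) / (1 + 4 * α) := by
  have hball : ball (0:ℂ) 1 ∈ 𝓝 (0:ℂ) := ball_mem_nhds _ one_pos
  have h0mem : (0:ℂ) ∈ ball (0:ℂ) 1 := mem_ball_self one_pos
  have hf' : AnalyticOnNhd ℂ f (ball (0:ℂ) 1) :=
    (isOpen_ball.analyticOn_iff_analyticOnNhd).mp hf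
  have hg' : AnalyticOnNhd ℂ g (ball (0:ℂ) 1) :=
    (isOpen_ball.analyticOn_iff_analyticOnNhd).mp hg
  have hu' : AnalyticOnNhd ℂ u (ball (0:ℂ) 1) :=
    (isOpen_ball.analyticOn_iff_analyticOnNhd).mp hu
  have hv' : AnalyticOnNhd ℂ v (ball (0:ℂ) 1) :=
    (isOpen_ball.analyticOn_iff_analyticOnNhd).mp hv
  have hφ' : AnalyticOnNhd ℂ φ (ball (0:ℂ) 1) :=
    (isOpen_ball.analyticOn_iff_analyticOnNhd).mp hφ
  have hfa := hf' 0 h0mem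
  have hga := hg' 0 h0mem
  have hua := hu' 0 h0mem
  have hva := hv' 0 h0mem
  have hφa := hφ' 0 h0mem
  obtain ⟨hg0, hg1, hG2, hG3⟩ := inv_coeffs f g hfa hga hf0 hf1 hinv
  have hb1 : deriv φ 0 = (B₁:ℂ) := by
    have h := hB₁
    rw [tc, iteratedDeriv_one] at h
    simpa using h
  have hb2 : iteratedDeriv 2 φ 0 = 2 * (B₂:ℂ) := by
    have h := hB₂
    rw [tc, show ((Nat.factorial 2 : ℕ):ℂ) = 2 by norm_num [Nat.factorial]] at h
    field_simp at h
    linear_combination h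
  have heqf : ∀ᶠ z in 𝓝 (0:ℂ),
      z * deriv f z + (α:ℂ) * z ^ 2 * iteratedDeriv 2 f z = φ (u z) * f z := by
    filter_upwards [hball] with z hz
    rcases eq_or_ne z 0 with rfl | hz0
    · simp [hf0]
    · have hfe := hfu z hz hz0
      have hfz : f z ≠ 0 := by
        intro hzero
        exact hz0 (hfinj hz h0mem (by rw [hzero, hf0]))
      rw [← add_div, div_eq_iff hfz] at hfe
      exact hfe
  have heqg : ∀ᶠ z in 𝓝 (0:ℂ),
      z * deriv g z + (α:ℂ) * z ^ 2 * iteratedDeriv 2 g z = φ (v z) * g z := by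
    filter_upwards [hball] with z hz
    rcases eq_or_ne z 0 with rfl | hz0
    · simp [hg0]
    · have hge := hgv z hz hz0
      have hgz : g z ≠ 0 := by
        intro hzero
        exact hz0 (hginj hz h0mem (by rw [hzero, hg0]))
      rw [← add_div, div_eq_iff hgz] at hge
      exact hge
  obtain ⟨ef1, ef2⟩ := coeff_eqs f u φ ((α:ℂ)) ((B₁:ℂ)) ((B₂:ℂ))
    hfa hua hφa hf0 hf1 hu0 hφ0 hb1 hb2 heqf
  obtain ⟨eg1, eg2⟩ := coeff_eqs g v φ ((α:ℂ)) ((B₁:ℂ)) ((B₂:ℂ))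
    hga hva hφa hg0 hg1 hv0 hφ0 hb1 hb2 heqg
  have hb1ne : (B₁:ℂ) ≠ 0 := by exact_mod_cast hB₁pos.ne'
  have hV1 : deriv v 0 = - deriv u 0 := by
    have h2 : (B₁:ℂ) * (deriv v 0 + deriv u 0) = 0 := by
      linear_combination ((1+2*(α:ℂ)) * hG2 - eg1 - ef1) / 2
    rcases mul_eq_zero.mp h2 with h | h
    · exact absurd h hb1ne
    · exact eq_neg_of_add_eq_zero_left h
  have KI : ((2:ℂ)+8*(α:ℂ))*((2:ℂ)+6*(α:ℂ)) * iteratedDeriv 3 f 0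
      = 3*(B₁:ℂ)*((3+10*(α:ℂ)) * iteratedDeriv 2 u 0 + (1+2*(α:ℂ)) * iteratedDeriv 2 v 0)
        + (24+72*(α:ℂ))*(B₂:ℂ)*(deriv u 0)^2 := by
    rw [hG3, hG2, hV1] at eg2
    linear_combination (3+10*(α:ℂ))*ef2 + (1+2*(α:ℂ))*eg2
      - ((3:ℂ)/2)*(4+12*(α:ℂ))*(iteratedDeriv 2 f 0)*ef1
  have hSu := schwarz_two u hu' hu0 humap
  have hSv := schwarz_two v hv' hv0 hvmap
  have hvnorm : ‖deriv v 0‖ = ‖deriv u 0‖ := by rw [hV1, norm_neg]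
  rw [hvnorm] at hSv
  set t : ℝ := ‖deriv u 0‖ with ht_def
  have ht0 : 0 ≤ t := norm_nonneg _
  have ht1 : t^2 ≤ 1 := by nlinarith [hSu, norm_nonneg (iteratedDeriv 2 u 0)]
  have hU2 : ‖iteratedDeriv 2 u 0‖ ≤ 2*(1 - t^2) := by linarith [hSu]
  have hV2 : ‖iteratedDeriv 2 v 0‖ ≤ 2*(1 - t^2) := by linarith [hSv]
  have hre : ∀ r : ℝ, 0 ≤ r → ‖((r:ℝ):ℂ)‖ = r := fun r hr => by
    rw [Complex.norm_real, Real.norm_eq_abs, _root_.abs_of_nonneg hr]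
  -- norm of the left side of KI
  have hLnorm : ‖((2:ℂ)+8*(α:ℂ))*((2:ℂ)+6*(α:ℂ)) * iteratedDeriv 3 f 0‖
      = (2+8*α)*(2+6*α)*‖iteratedDeriv 3 f 0‖ := by
    rw [norm_mul, norm_mul]
    rw [show ((2:ℂ)+8*(α:ℂ)) = (((2+8*α : ℝ)):ℂ) by push_cast; ring,
        show ((2:ℂ)+6*(α:ℂ)) = (((2+6*α : ℝ)):ℂ) by push_cast; ring,
        hre _ (by linarith), hre _ (by linarith)]
  -- norm of the right side of KI
  have hRnorm : ‖3*(B₁:ℂ)*((3+10*(α:ℂ)) * iteratedDeriv 2 u 0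
        + (1+2*(α:ℂ)) * iteratedDeriv 2 v 0) + (24+72*(α:ℂ))*(B₂:ℂ)*(deriv u 0)^2‖
      ≤ 3*B₁*((3+10*α)*(2*(1-t^2)) + (1+2*α)*(2*(1-t^2))) + (24+72*α)*|B₂| * t^2 := by
    have e3 : ‖(3:ℂ)*(B₁:ℂ)‖ = 3*B₁ := by
      rw [show (3:ℂ)*(B₁:ℂ) = (((3*B₁:ℝ)):ℂ) by push_cast; ring, hre _ (by positivity)]
    have e24 : ‖(24+72*(α:ℂ))*(B₂:ℂ)‖ = (24+72*α)*|B₂| := by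
      rw [show (24+72*(α:ℂ))*(B₂:ℂ) = ((((24+72*α)*B₂:ℝ)):ℂ) by push_cast; ring,
        Complex.norm_real, Real.norm_eq_abs, abs_mul, _root_.abs_of_nonneg (by linarith : (0:ℝ) ≤ 24+72*α)]
    calc ‖3*(B₁:ℂ)*((3+10*(α:ℂ)) * iteratedDeriv 2 u 0
          + (1+2*(α:ℂ)) * iteratedDeriv 2 v 0) + (24+72*(α:ℂ))*(B₂:ℂ)*(deriv u 0)^2‖
        ≤ ‖3*(B₁:ℂ)*((3+10*(α:ℂ)) * iteratedDeriv 2 u 0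
            + (1+2*(α:ℂ)) * iteratedDeriv 2 v 0)‖ + ‖(24+72*(α:ℂ))*(B₂:ℂ)*(deriv u 0)^2‖ :=
          norm_add_le _ _
      _ ≤ 3*B₁*((3+10*α)*(2*(1-t^2)) + (1+2*α)*(2*(1-t^2))) + (24+72*α)*|B₂| * t^2 := by
          have p1 : ‖3*(B₁:ℂ)*((3+10*(α:ℂ)) * iteratedDeriv 2 u 0
              + (1+2*(α:ℂ)) * iteratedDeriv 2 v 0)‖
              ≤ 3*B₁*((3+10*α)*(2*(1-t^2)) + (1+2*α)*(2*(1-t^2))) := by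
            rw [norm_mul, e3]
            refine mul_le_mul_of_nonneg_left ?_ (by positivity)
            calc ‖(3+10*(α:ℂ)) * iteratedDeriv 2 u 0 + (1+2*(α:ℂ)) * iteratedDeriv 2 v 0‖
                ≤ ‖(3+10*(α:ℂ)) * iteratedDeriv 2 u 0‖ + ‖(1+2*(α:ℂ)) * iteratedDeriv 2 v 0‖ :=
                  norm_add_le _ _
              _ ≤ (3+10*α)*(2*(1-t^2)) + (1+2*α)*(2*(1-t^2)) := by
                  have q1 : ‖(3+10*(α:ℂ)) * iteratedDeriv 2 u 0‖ ≤ (3+10*α)*(2*(1-t^2)) := by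
                    rw [norm_mul, show ((3:ℂ)+10*(α:ℂ)) = (((3+10*α : ℝ)):ℂ) by push_cast; ring,
                      hre _ (by linarith)]
                    exact mul_le_mul_of_nonneg_left hU2 (by linarith)
                  have q2 : ‖(1+2*(α:ℂ)) * iteratedDeriv 2 v 0‖ ≤ (1+2*α)*(2*(1-t^2)) := by
                    rw [norm_mul, show ((1:ℂ)+2*(α:ℂ)) = (((1+2*α : ℝ)):ℂ) by push_cast; ring,
                      hre _ (by linarith)]
                    exact mul_le_mul_of_nonneg_left hV2 (by linarith)
                  linarith
          have p2 : ‖(24+72*(α:ℂ))*(B₂:ℂ)*(deriv u 0)^2‖ = (24+72*α)*|B₂| * t^2 := by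
            rw [norm_mul, e24, norm_pow]
          linarith
  -- combine
  have hcomb : (2+8*α)*(2+6*α)*‖iteratedDeriv 3 f 0‖
      ≤ (24+72*α)*(B₁ + |B₂ - B₁|) := by
    have h1 : (2+8*α)*(2+6*α)*‖iteratedDeriv 3 f 0‖
        ≤ 3*B₁*((3+10*α)*(2*(1-t^2)) + (1+2*α)*(2*(1-t^2))) + (24+72*α)*|B₂| * t^2 := by
      rw [← hLnorm, KI]
      exact hRnorm
    have hB2abs : |B₂| ≤ B₁ + |B₂ - B₁| := by
      calc |B₂| = |B₁ + (B₂ - B₁)| := by rw [show B₁ + (B₂ - B₁) = B₂ by ring]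
        _ ≤ |B₁| + |B₂ - B₁| := abs_add_le _ _
        _ = B₁ + |B₂ - B₁| := by rw [abs_of_pos hB₁pos]
    have habs0 : 0 ≤ |B₂ - B₁| := abs_nonneg _
    nlinarith [mul_nonneg (mul_nonneg (by linarith : (0:ℝ) ≤ 24+72*α) (sq_nonneg t))
        (sub_nonneg.mpr hB2abs), sq_nonneg t, mul_nonneg hα habs0]
  -- finish
  have htc : ‖tc f 3‖ = ‖iteratedDeriv 3 f 0‖ / 6 := by
    rw [tc, norm_div, show ((Nat.factorial 3 : ℕ):ℂ) = 6 by norm_num [Nat.factorial]]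
    norm_num
  rw [htc, div_le_div_iff₀ (by norm_num) (by linarith : (0:ℝ) < 1 + 4*α)]
  have h13 : (0:ℝ) < 4*(1+3*α) := by linarith
  have hstep : (4*(1+3*α)) * (‖iteratedDeriv 3 f 0‖ * (1+4*α))
      ≤ (4*(1+3*α)) * ((B₁ + |B₂ - B₁|)*6) := by
    calc (4*(1+3*α)) * (‖iteratedDeriv 3 f 0‖ * (1+4*α))
        = (2+8*α)*(2+6*α)*‖iteratedDeriv 3 f 0‖ := by ring
      _ ≤ (24+72*α)*(B₁ + |B₂ - B₁|) := hcomb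
      _ = (4*(1+3*α)) * ((B₁ + |B₂ - B₁|)*6) := by ring
  exact le_of_mul_le_mul_left hstep h13
end
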